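/- arXiv:2107.10660 — 5 statements merged into one kernel-verified Lean document; each statement's English description precedes it below -/
import Mathlib

section
/- Let G be a connected simple graph that contains an induced cycle C_4. Then either G is isomorphic to one of the graphs K_{2,l} for some l ≥ 2, W_4 = K_1 ∨ C_4, or E_2 ∨ C_4, or there exists an edge e ∈ E(G) such that G/e contains an induced C_4. -/
open SimpleGraph

/-- Contraction of the edge between adjacent vertices `u` and `v`:
`v` is merged into `u`, so the vertex set is `V \ {v}`, and `u` inherits
the neighbours of `v`; loops and multiple edges are removed. -/
def SimpleGraph.contractEdge {V : Type*} (G : SimpleGraph V) (u v : V) :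
    SimpleGraph {x : V // x ≠ v} where
  Adj a b := a ≠ b ∧
    (G.Adj a.1 b.1 ∨ (a.1 = u ∧ G.Adj v b.1) ∨ (b.1 = u ∧ G.Adj v a.1))
  symm := by
    constructor
    rintro a b ⟨hab, h⟩
    refine ⟨hab.symm, ?_⟩
    rcases h with h | ⟨h1, h2⟩ | ⟨h1, h2⟩
    · exact Or.inl h.symm
    · exact Or.inr (Or.inr ⟨h1, h2⟩)
    · exact Or.inr (Or.inl ⟨h1, h2⟩)
  loopless := by constructor; rintro a ⟨hab, -⟩; exact hab rfl

/-- `G` contains an induced subgraph isomorphic to `H`. -/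
def SimpleGraph.HasInduced {V W : Type*} (G : SimpleGraph V) (H : SimpleGraph W) : Prop :=
  ∃ S : Set V, Nonempty (G.induce S ≃g H)

/-- A set of vertices is independent if its vertices are pairwise nonadjacent. -/
def SimpleGraph.IsIndependentSet {V : Type*} (G : SimpleGraph V) (S : Set V) : Prop :=
  S.Pairwise fun a b => ¬ G.Adj a b

/-- `2K₂`: two disjoint edges. -/
def twoK2 : SimpleGraph (Fin 4) := fromEdgeSet {s(0,1), s(2,3)}

/-- The hammer: a triangle `0,1,2` with the path `2-3-4` of length two attached. -/
def hammerGraph : SimpleGraph (Fin 5) :=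
  fromEdgeSet {s(0,1), s(0,2), s(1,2), s(2,3), s(3,4)}

/-- The butterfly: two triangles `0,1,2` and `2,3,4` sharing exactly the vertex `2`. -/
def butterflyGraph : SimpleGraph (Fin 5) :=
  fromEdgeSet {s(0,1), s(0,2), s(1,2), s(2,3), s(2,4), s(3,4)}

/-- The wheel `W₄ = K₁ ∨ C₄`: the vertex `4` joined to the 4-cycle `0-1-2-3`. -/
def W4Graph : SimpleGraph (Fin 5) :=
  fromEdgeSet {s(0,1), s(1,2), s(2,3), s(3,0), s(4,0), s(4,1), s(4,2), s(4,3)}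

/-- `E₂ ∨ C₄`: the two nonadjacent vertices `4, 5` each joined to the 4-cycle `0-1-2-3`. -/
def E2JoinC4Graph : SimpleGraph (Fin 6) :=
  fromEdgeSet {s(0,1), s(1,2), s(2,3), s(3,0),
    s(4,0), s(4,1), s(4,2), s(4,3), s(5,0), s(5,1), s(5,2), s(5,3)}

section AuxLemmas

lemma hasInduced_of_pattern {V : Type*} [DecidableEq V] (G : SimpleGraph V) {a b c d : V}
    (hab : G.Adj a b) (hbc : G.Adj b c) (hcd : G.Adj c d) (hda : G.Adj d a)
    (hac : ¬G.Adj a c) (hbd : ¬G.Adj b d) (hac' : a ≠ c) (hbd' : b ≠ d) :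
    G.HasInduced (cycleGraph 4) := by
  have hba := hab.symm; have hcb := hbc.symm; have hdc := hcd.symm; have had := hda.symm
  have hca : ¬G.Adj c a := fun h => hac h.symm
  have hdb : ¬G.Adj d b := fun h => hbd h.symm
  have naa := G.loopless.irrefl a; have nbb := G.loopless.irrefl b
  have ncc := G.loopless.irrefl c; have ndd := G.loopless.irrefl d
  have key : ∀ i j : Fin 4, G.Adj (![a,b,c,d] i) (![a,b,c,d] j) ↔ (cycleGraph 4).Adj i j := by
    intro i j
    fin_cases i <;> fin_cases j <;>
      simp only [Matrix.cons_val_zero, Matrix.cons_val_one, Matrix.head_cons,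
        Matrix.cons_val_succ, Matrix.cons_val_fin_one] <;>
      first
        | exact iff_of_true (by assumption) (by decide)
        | exact iff_of_false (by assumption) (by decide)
  have h1 : a ≠ b := hab.ne
  have h2 : b ≠ c := hbc.ne
  have h3 : c ≠ d := hcd.ne
  have h4 : d ≠ a := hda.ne
  have h1' := h1.symm; have h2' := h2.symm; have h3' := h3.symm; have h4' := h4.symm
  have h5' := hac'.symm; have h6' := hbd'.symm
  have hinj : Function.Injective ![a,b,c,d] := by
    intro i j hij
    fin_cases i <;> fin_cases j <;>
      first
        | rfl
        | (exfalso;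
           revert hij;
           simp only [Matrix.cons_val_zero, Matrix.cons_val_one, Matrix.head_cons,
             Matrix.cons_val_succ, Matrix.cons_val_fin_one];
           assumption)
  refine ⟨Set.range ![a,b,c,d], ⟨?_⟩⟩
  refine RelIso.symm ⟨(Equiv.ofInjective _ hinj), ?_⟩
  intro i j
  show (G.induce _).Adj ⟨![a,b,c,d] i, _⟩ ⟨![a,b,c,d] j, _⟩ ↔ _
  simpa only [comap_adj, Function.Embedding.coe_subtype] using key i j

lemma pattern_of_hasInduced {V : Type*} (G : SimpleGraph V)
    (h : G.HasInduced (cycleGraph 4)) :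
    ∃ a b c d : V, G.Adj a b ∧ G.Adj b c ∧ G.Adj c d ∧ G.Adj d a ∧
      ¬G.Adj a c ∧ ¬G.Adj b d ∧ a ≠ c ∧ b ≠ d := by
  obtain ⟨S, ⟨e⟩⟩ := h
  have adj : ∀ i j : Fin 4, (cycleGraph 4).Adj i j →
      G.Adj (e.symm i : S) (e.symm j : S) := fun i j h =>
    (e.symm.map_rel_iff.mpr h : (G.induce S).Adj _ _)
  have nadj : ∀ i j : Fin 4, ¬(cycleGraph 4).Adj i j →
      ¬G.Adj (e.symm i : S) (e.symm j : S) := fun i j h hadj =>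
    h (e.symm.map_rel_iff.mp (hadj : (G.induce S).Adj _ _))
  have nequ : ∀ i j : Fin 4, i ≠ j → ((e.symm i : S) : V) ≠ ((e.symm j : S) : V) :=
    fun i j h he => h (e.symm.injective (Subtype.ext he))
  exact ⟨e.symm 0, e.symm 1, e.symm 2, e.symm 3,
    adj 0 1 (by decide), adj 1 2 (by decide), adj 2 3 (by decide), adj 3 0 (by decide),
    nadj 0 2 (by decide), nadj 1 3 (by decide), nequ 0 2 (by decide), nequ 1 3 (by decide)⟩

lemma contract_hasInduced {V : Type*} [DecidableEq V] (G : SimpleGraph V) (u v : V)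
    {a b c d : V} (ha : a ≠ v) (hb : b ≠ v) (hc : c ≠ v) (hd : d ≠ v)
    (hab : G.Adj a b) (hbc : G.Adj b c) (hcd : G.Adj c d) (hda : G.Adj d a)
    (nac : ¬G.Adj a c) (nbd : ¬G.Adj b d) (hacne : a ≠ c) (hbdne : b ≠ d)
    (uac1 : a = u → ¬G.Adj v c) (uac2 : c = u → ¬G.Adj v a)
    (ubd1 : b = u → ¬G.Adj v d) (ubd2 : d = u → ¬G.Adj v b) :
    (G.contractEdge u v).HasInduced (cycleGraph 4) := by
  have mkAdj : ∀ (x y : V) (hx : x ≠ v) (hy : y ≠ v), G.Adj x y →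
      (G.contractEdge u v).Adj ⟨x, hx⟩ ⟨y, hy⟩ := fun x y hx hy h =>
    ⟨fun he => h.ne (congrArg Subtype.val he), Or.inl h⟩
  have mkNadj : ∀ (x y : V) (hx : x ≠ v) (hy : y ≠ v), ¬G.Adj x y →
      (x = u → ¬G.Adj v y) → (y = u → ¬G.Adj v x) →
      ¬(G.contractEdge u v).Adj ⟨x, hx⟩ ⟨y, hy⟩ := by
    rintro x y hx hy hn h1 h2 ⟨-, h | ⟨e1, e2⟩ | ⟨e1, e2⟩⟩
    · exact hn h
    · exact h1 e1 e2
    · exact h2 e1 e2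
  exact hasInduced_of_pattern _ (mkAdj a b ha hb hab) (mkAdj b c hb hc hbc)
    (mkAdj c d hc hd hcd) (mkAdj d a hd ha hda)
    (mkNadj a c ha hc nac uac1 uac2) (mkNadj b d hb hd nbd ubd1 ubd2)
    (fun h => hacne (congrArg Subtype.val h)) (fun h => hbdne (congrArg Subtype.val h))

lemma rotKeep {V : Type*} [DecidableEq V] (G : SimpleGraph V) {a b c d w : V}
    (hab : G.Adj a b) (hbc : G.Adj b c) (hcd : G.Adj c d) (hda : G.Adj d a)
    (nac : ¬G.Adj a c) (nbd : ¬G.Adj b d) (hac' : a ≠ c) (hbd' : b ≠ d)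
    (hbw : b ≠ w) (hcw : c ≠ w) (hdw : d ≠ w)
    (hwa : G.Adj w a) (nwc : ¬G.Adj w c) :
    ∃ u v : V, G.Adj u v ∧ (G.contractEdge u v).HasInduced (cycleGraph 4) :=
  ⟨a, w, hwa.symm, contract_hasInduced G a w hwa.ne' hbw hcw hdw
    hab hbc hcd hda nac nbd hac' hbd'
    (fun _ => nwc) (fun h => (hac'.symm h).elim)
    (fun h => (hab.ne' h).elim) (fun h => (hda.ne h).elim)⟩

lemma charK {V : Type*} [DecidableEq V] (G : SimpleGraph V) {a c : V} (hac : a ≠ c)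
    (nac : ¬G.Adj a c)
    (hadj : ∀ x, x ≠ a → x ≠ c → G.Adj x a ∧ G.Adj x c)
    (hnon : ∀ x y, x ≠ a → x ≠ c → y ≠ a → y ≠ c → ¬G.Adj x y) :
    ∀ x y, G.Adj x y ↔
      ((x = a ∨ x = c) ∧ ¬(y = a ∨ y = c)) ∨ (¬(x = a ∨ x = c) ∧ (y = a ∨ y = c)) := by
  have hca : ¬G.Adj c a := fun h => nac h.symm
  intro x y
  by_cases hx1 : x = a
  · by_cases hy1 : y = a
    · simp [hx1, hy1, G.loopless, hac]
    by_cases hy2 : y = c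
    · simp [hx1, hy2, nac, hac]
    · have h : G.Adj a y := (hadj y hy1 hy2).1.symm
      simp [hx1, hy1, hy2, h]
  by_cases hx2 : x = c
  · by_cases hy1 : y = a
    · simp [hx2, hy1, hca, hac.symm]
    by_cases hy2 : y = c
    · simp [hx2, hy2, G.loopless, hac.symm]
    · have h : G.Adj c y := (hadj y hy1 hy2).2.symm
      simp [hx2, hy1, hy2, h]
  by_cases hy1 : y = a
  · have h := (hadj x hx1 hx2).1
    simp [hy1, h, hx1, hx2]
  by_cases hy2 : y = c
  · have h := (hadj x hx1 hx2).2
    simp [hy2, h, hx1, hx2]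
  · have h := hnon x y hx1 hx2 hy1 hy2
    simp [h, hx1, hx2, hy1, hy2]

lemma caseK {V : Type*} [Fintype V] [DecidableEq V] (G : SimpleGraph V) (a c : V) (hac : a ≠ c)
    (b d : V) (hbd : b ≠ d) (hb : ¬(b = a ∨ b = c)) (hd : ¬(d = a ∨ d = c))
    (char : ∀ x y, G.Adj x y ↔
      ((x = a ∨ x = c) ∧ ¬(y = a ∨ y = c)) ∨ (¬(x = a ∨ x = c) ∧ (y = a ∨ y = c))) :
    ∃ l : ℕ, 2 ≤ l ∧ Nonempty (G ≃g completeBipartiteGraph (Fin 2) (Fin l)) := by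
  classical
  set p : V → Prop := fun x => x = a ∨ x = c with hp
  have eL : {x // p x} ≃ Fin 2 :=
    { toFun := fun x => if x.1 = a then 0 else 1
      invFun := fun i => if i = 0 then ⟨a, Or.inl rfl⟩ else ⟨c, Or.inr rfl⟩
      left_inv := by rintro ⟨x, (rfl | rfl)⟩ <;> simp [hac.symm]
      right_inv := by intro i; fin_cases i <;> simp [hac.symm] }
  refine ⟨Fintype.card {x // ¬p x}, ?_, ?_⟩
  · exact Fintype.one_lt_card_iff.mpr ⟨⟨b, hb⟩, ⟨d, hd⟩, by simp [hbd]⟩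
  have eR := Fintype.equivFin {x // ¬p x}
  refine ⟨⟨(Equiv.sumCompl p).symm.trans (eL.sumCongr eR), ?_⟩⟩
  intro x y
  simp only [Equiv.trans_apply, Equiv.sumCongr_apply]
  rcases em (p x) with hx | hx <;> rcases em (p y) with hy | hy
  · rw [Equiv.sumCompl_symm_apply_of_pos hx, Equiv.sumCompl_symm_apply_of_pos hy]
    simp only [hp] at hx hy; simp [char x y, hx, hy]
  · rw [Equiv.sumCompl_symm_apply_of_pos hx, Equiv.sumCompl_symm_apply_of_neg hy]
    simp only [hp] at hx hy; simp [char x y, hx, hy]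
  · rw [Equiv.sumCompl_symm_apply_of_neg hx, Equiv.sumCompl_symm_apply_of_pos hy]
    simp only [hp] at hx hy; simp [char x y, hx, hy]
  · rw [Equiv.sumCompl_symm_apply_of_neg hx, Equiv.sumCompl_symm_apply_of_neg hy]
    simp only [hp] at hx hy; simp [char x y, hx, hy]

lemma caseW4 {V : Type*} [DecidableEq V] (G : SimpleGraph V) {a b c d w : V}
    (hab : G.Adj a b) (hbc : G.Adj b c) (hcd : G.Adj c d) (hda : G.Adj d a)
    (nac : ¬G.Adj a c) (nbd : ¬G.Adj b d) (hac' : a ≠ c) (hbd' : b ≠ d)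
    (hwa : G.Adj w a) (hwb : G.Adj w b) (hwc : G.Adj w c) (hwd : G.Adj w d)
    (huniv : ∀ x : V, x = a ∨ x = b ∨ x = c ∨ x = d ∨ x = w) :
    Nonempty (G ≃g W4Graph) := by
  have hba := hab.symm; have hcb := hbc.symm; have hdc := hcd.symm; have had := hda.symm
  have haw := hwa.symm; have hbw := hwb.symm; have hcw := hwc.symm; have hdw := hwd.symm
  have hca : ¬G.Adj c a := fun h => nac h.symm
  have hdb : ¬G.Adj d b := fun h => nbd h.symm
  have naa := G.loopless.irrefl a; have nbb := G.loopless.irrefl b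
  have ncc := G.loopless.irrefl c; have ndd := G.loopless.irrefl d; have nww := G.loopless.irrefl w
  have key : ∀ i j : Fin 5, G.Adj (![a,b,c,d,w] i) (![a,b,c,d,w] j) ↔ W4Graph.Adj i j := by
    intro i j
    fin_cases i <;> fin_cases j <;>
      simp only [Matrix.cons_val_zero, Matrix.cons_val_one, Matrix.head_cons,
        Matrix.cons_val_succ, Matrix.cons_val_fin_one] <;>
      first
        | exact iff_of_true (by assumption)
            (by simp only [W4Graph, fromEdgeSet_adj, Set.mem_insert_iff, Set.mem_singleton_iff];
                decide)
        | exact iff_of_false (by assumption)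
            (by simp only [W4Graph, fromEdgeSet_adj, Set.mem_insert_iff, Set.mem_singleton_iff];
                decide)
  have h1 : a ≠ b := hab.ne
  have h2 : b ≠ c := hbc.ne
  have h3 : c ≠ d := hcd.ne
  have h4 : d ≠ a := hda.ne
  have h5 : w ≠ a := hwa.ne
  have h6 : w ≠ b := hwb.ne
  have h7 : w ≠ c := hwc.ne
  have h8 : w ≠ d := hwd.ne
  have h1' := h1.symm; have h2' := h2.symm; have h3' := h3.symm; have h4' := h4.symm
  have h5' := h5.symm; have h6' := h6.symm; have h7' := h7.symm; have h8' := h8.symm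
  have h9' := hac'.symm; have h10' := hbd'.symm
  have hinj : Function.Injective ![a,b,c,d,w] := by
    intro i j hij
    fin_cases i <;> fin_cases j <;>
      first
        | rfl
        | (exfalso;
           revert hij;
           simp only [Matrix.cons_val_zero, Matrix.cons_val_one, Matrix.head_cons,
             Matrix.cons_val_succ, Matrix.cons_val_fin_one];
           assumption)
  have hsurj : Function.Surjective ![a,b,c,d,w] := by
    intro x
    rcases huniv x with rfl | rfl | rfl | rfl | rfl
    exacts [⟨0, rfl⟩, ⟨1, rfl⟩, ⟨2, rfl⟩, ⟨3, rfl⟩, ⟨4, rfl⟩]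
  exact ⟨(RelIso.symm ⟨Equiv.ofBijective _ ⟨hinj, hsurj⟩, fun {i j} => key i j⟩)⟩

lemma caseE2 {V : Type*} [DecidableEq V] (G : SimpleGraph V) {a b c d w z : V}
    (hab : G.Adj a b) (hbc : G.Adj b c) (hcd : G.Adj c d) (hda : G.Adj d a)
    (nac : ¬G.Adj a c) (nbd : ¬G.Adj b d) (hac' : a ≠ c) (hbd' : b ≠ d)
    (hwa : G.Adj w a) (hwb : G.Adj w b) (hwc : G.Adj w c) (hwd : G.Adj w d)
    (hza : G.Adj z a) (hzb : G.Adj z b) (hzc : G.Adj z c) (hzd : G.Adj z d)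
    (nwz : ¬G.Adj w z) (hwz : w ≠ z)
    (huniv : ∀ x : V, x = a ∨ x = b ∨ x = c ∨ x = d ∨ x = w ∨ x = z) :
    Nonempty (G ≃g E2JoinC4Graph) := by
  have hba := hab.symm; have hcb := hbc.symm; have hdc := hcd.symm; have had := hda.symm
  have haw := hwa.symm; have hbw := hwb.symm; have hcw := hwc.symm; have hdw := hwd.symm
  have haz := hza.symm; have hbz := hzb.symm; have hcz := hzc.symm; have hdz := hzd.symm
  have hca : ¬G.Adj c a := fun h => nac h.symm
  have hdb : ¬G.Adj d b := fun h => nbd h.symm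
  have nzw : ¬G.Adj z w := fun h => nwz h.symm
  have naa := G.loopless.irrefl a; have nbb := G.loopless.irrefl b
  have ncc := G.loopless.irrefl c; have ndd := G.loopless.irrefl d
  have nww := G.loopless.irrefl w; have nzz := G.loopless.irrefl z
  have key : ∀ i j : Fin 6, G.Adj (![a,b,c,d,w,z] i) (![a,b,c,d,w,z] j) ↔
      E2JoinC4Graph.Adj i j := by
    intro i j
    fin_cases i <;> fin_cases j <;>
      simp only [Matrix.cons_val_zero, Matrix.cons_val_one, Matrix.head_cons,
        Matrix.cons_val_succ, Matrix.cons_val_fin_one] <;>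
      first
        | exact iff_of_true (by assumption)
            (by simp only [E2JoinC4Graph, fromEdgeSet_adj, Set.mem_insert_iff,
                  Set.mem_singleton_iff];
                decide)
        | exact iff_of_false (by assumption)
            (by simp only [E2JoinC4Graph, fromEdgeSet_adj, Set.mem_insert_iff,
                  Set.mem_singleton_iff];
                decide)
  have h1 : a ≠ b := hab.ne
  have h2 : b ≠ c := hbc.ne
  have h3 : c ≠ d := hcd.ne
  have h4 : d ≠ a := hda.ne
  have h5 : w ≠ a := hwa.ne
  have h6 : w ≠ b := hwb.ne
  have h7 : w ≠ c := hwc.ne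
  have h8 : w ≠ d := hwd.ne
  have g5 : z ≠ a := hza.ne
  have g6 : z ≠ b := hzb.ne
  have g7 : z ≠ c := hzc.ne
  have g8 : z ≠ d := hzd.ne
  have h1' := h1.symm; have h2' := h2.symm; have h3' := h3.symm; have h4' := h4.symm
  have h5' := h5.symm; have h6' := h6.symm; have h7' := h7.symm; have h8' := h8.symm
  have g5' := g5.symm; have g6' := g6.symm; have g7' := g7.symm; have g8' := g8.symm
  have h9' := hac'.symm; have h10' := hbd'.symm; have h11' := hwz.symm
  have hinj : Function.Injective ![a,b,c,d,w,z] := by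
    intro i j hij
    fin_cases i <;> fin_cases j <;>
      first
        | rfl
        | (exfalso;
           revert hij;
           simp only [Matrix.cons_val_zero, Matrix.cons_val_one, Matrix.head_cons,
             Matrix.cons_val_succ, Matrix.cons_val_fin_one];
           assumption)
  have hsurj : Function.Surjective ![a,b,c,d,w,z] := by
    intro x
    rcases huniv x with rfl | rfl | rfl | rfl | rfl | rfl
    exacts [⟨0, rfl⟩, ⟨1, rfl⟩, ⟨2, rfl⟩, ⟨3, rfl⟩, ⟨4, rfl⟩, ⟨5, rfl⟩]
  exact ⟨(RelIso.symm ⟨Equiv.ofBijective _ ⟨hinj, hsurj⟩, fun {i j} => key i j⟩)⟩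

end AuxLemmas

/-- Lemma 7. If a connected graph `G` has an induced `C₄`, then
either `G` is isomorphic to some `K_{2,l}` (`l ≥ 2`), to `W₄ = K₁ ∨ C₄`, or to
`E₂ ∨ C₄`, or some edge contraction of `G` still has an induced `C₄`. -/
theorem stmt5 {V : Type*} [Fintype V] [DecidableEq V] (G : SimpleGraph V)
    (hG : G.Connected) (hC4 : G.HasInduced (cycleGraph 4)) :
    (∃ l : ℕ, 2 ≤ l ∧ Nonempty (G ≃g completeBipartiteGraph (Fin 2) (Fin l))) ∨
    Nonempty (G ≃g W4Graph) ∨ Nonempty (G ≃g E2JoinC4Graph) ∨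
    ∃ u v : V, G.Adj u v ∧ (G.contractEdge u v).HasInduced (cycleGraph 4) := by
  classical
  obtain ⟨a, b, c, d, hab, hbc, hcd, hda, nac, nbd, hac', hbd'⟩ := pattern_of_hasInduced G hC4
  have hba := hab.symm; have hcb := hbc.symm; have hdc := hcd.symm; have had := hda.symm
  have hca : ¬G.Adj c a := fun h => nac h.symm
  have hdb : ¬G.Adj d b := fun h => nbd h.symm
  -- Step 1 : an edge avoiding the 4-cycle
  by_cases h1 : ∃ x y : V, (x ≠ a ∧ x ≠ b ∧ x ≠ c ∧ x ≠ d) ∧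
      (y ≠ a ∧ y ≠ b ∧ y ≠ c ∧ y ≠ d) ∧ G.Adj x y
  · obtain ⟨x, y, hx, hy, hxy⟩ := h1
    refine Or.inr (Or.inr (Or.inr ⟨x, y, hxy, ?_⟩))
    exact contract_hasInduced G x y hy.1.symm hy.2.1.symm hy.2.2.1.symm hy.2.2.2.symm
      hab hbc hcd hda nac nbd hac' hbd'
      (fun h => (hx.1 h.symm).elim) (fun h => (hx.2.2.1 h.symm).elim)
      (fun h => (hx.2.1 h.symm).elim) (fun h => (hx.2.2.2 h.symm).elim)
  have hno : ∀ x y : V, (x ≠ a ∧ x ≠ b ∧ x ≠ c ∧ x ≠ d) →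
      (y ≠ a ∧ y ≠ b ∧ y ≠ c ∧ y ≠ d) → ¬G.Adj x y :=
    fun x y hx hy hxy => h1 ⟨x, y, hx, hy, hxy⟩
  -- every outside vertex has a neighbour on the cycle
  have hnbr : ∀ w : V, (w ≠ a ∧ w ≠ b ∧ w ≠ c ∧ w ≠ d) →
      G.Adj w a ∨ G.Adj w b ∨ G.Adj w c ∨ G.Adj w d := by
    intro w hw
    obtain ⟨y, hy⟩ : ∃ y, G.Adj w y := by
      obtain ⟨p⟩ := hG.preconnected w a
      cases p with
      | nil => exact absurd rfl hw.1
      | cons h _ => exact ⟨_, h⟩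
    by_cases e1 : y = a
    · exact Or.inl (e1 ▸ hy)
    by_cases e2 : y = b
    · exact Or.inr (Or.inl (e2 ▸ hy))
    by_cases e3 : y = c
    · exact Or.inr (Or.inr (Or.inl (e3 ▸ hy)))
    by_cases e4 : y = d
    · exact Or.inr (Or.inr (Or.inr (e4 ▸ hy)))
    · exact (hno w y hw ⟨e1, e2, e3, e4⟩ hy).elim
  -- Step 2 : a pendant-type vertex
  by_cases h2 : ∃ w : V, (w ≠ a ∧ w ≠ b ∧ w ≠ c ∧ w ≠ d) ∧
      ((G.Adj w a ∧ ¬G.Adj w c) ∨ (G.Adj w b ∧ ¬G.Adj w d) ∨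
       (G.Adj w c ∧ ¬G.Adj w a) ∨ (G.Adj w d ∧ ¬G.Adj w b))
  · obtain ⟨w, hw, hcase⟩ := h2
    refine Or.inr (Or.inr (Or.inr ?_))
    rcases hcase with ⟨hA, hnC⟩ | ⟨hB, hnD⟩ | ⟨hC, hnA⟩ | ⟨hD, hnB⟩
    · exact rotKeep G hab hbc hcd hda nac nbd hac' hbd'
        hw.2.1.symm hw.2.2.1.symm hw.2.2.2.symm hA hnC
    · exact rotKeep G hbc hcd hda hab nbd hca hbd' hac'.symm
        hw.2.2.1.symm hw.2.2.2.symm hw.1.symm hB hnD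
    · exact rotKeep G hcd hda hab hbc hca hdb hac'.symm hbd'.symm
        hw.2.2.2.symm hw.1.symm hw.2.1.symm hC hnA
    · exact rotKeep G hda hab hbc hcd hdb nac hbd'.symm hac'
        hw.1.symm hw.2.1.symm hw.2.2.1.symm hD hnB
  have hac_w : ∀ w : V, (w ≠ a ∧ w ≠ b ∧ w ≠ c ∧ w ≠ d) → G.Adj w a → G.Adj w c :=
    fun w hw h => by
      by_contra hn; exact h2 ⟨w, hw, Or.inl ⟨h, hn⟩⟩
  have hbd_w : ∀ w : V, (w ≠ a ∧ w ≠ b ∧ w ≠ c ∧ w ≠ d) → G.Adj w b → G.Adj w d :=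
    fun w hw h => by
      by_contra hn; exact h2 ⟨w, hw, Or.inr (Or.inl ⟨h, hn⟩)⟩
  have hca_w : ∀ w : V, (w ≠ a ∧ w ≠ b ∧ w ≠ c ∧ w ≠ d) → G.Adj w c → G.Adj w a :=
    fun w hw h => by
      by_contra hn; exact h2 ⟨w, hw, Or.inr (Or.inr (Or.inl ⟨h, hn⟩))⟩
  have hdb_w : ∀ w : V, (w ≠ a ∧ w ≠ b ∧ w ≠ c ∧ w ≠ d) → G.Adj w d → G.Adj w b :=
    fun w hw h => by
      by_contra hn; exact h2 ⟨w, hw, Or.inr (Or.inr (Or.inr ⟨h, hn⟩))⟩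
  -- Step 3 : is there a dominating outside vertex?
  by_cases h3 : ∃ w : V, (w ≠ a ∧ w ≠ b ∧ w ≠ c ∧ w ≠ d) ∧ G.Adj w a ∧ G.Adj w b
  · obtain ⟨w0, hw0, hw0a, hw0b⟩ := h3
    have hw0c := hac_w w0 hw0 hw0a
    have hw0d := hbd_w w0 hw0 hw0b
    by_cases h4 : ∃ w : V, (w ≠ a ∧ w ≠ b ∧ w ≠ c ∧ w ≠ d) ∧ (¬G.Adj w a ∨ ¬G.Adj w b)
    · obtain ⟨w1, hw1, hcase⟩ := h4
      refine Or.inr (Or.inr (Or.inr ?_))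
      rcases hcase with hna | hnb
      · -- w1 has profile {b, d}
        have hw1b : G.Adj w1 b := by
          rcases hnbr w1 hw1 with h | h | h | h
          exacts [absurd h hna, h, absurd (hca_w w1 hw1 h) hna, hdb_w w1 hw1 h]
        have hw1d := hbd_w w1 hw1 hw1b
        exact ⟨a, w0, hw0a.symm, contract_hasInduced G a w0
          (fun h => hna (by rw [h]; exact hw0a)) hw0.2.1.symm hw0.1.symm hw0.2.2.2.symm
          hw1b hba had hw1d.symm
          hna nbd hw1.1 hbd'
          (fun h => (hw1.1 h).elim) (fun _ => hno w0 w1 hw0 hw1)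
          (fun h => (hab.ne' h).elim) (fun h => (hda.ne h).elim)⟩
      · -- w1 has profile {a, c}
        have hw1a : G.Adj w1 a := by
          rcases hnbr w1 hw1 with h | h | h | h
          exacts [h, absurd h hnb, hca_w w1 hw1 h, absurd (hdb_w w1 hw1 h) hnb]
        have hw1c := hac_w w1 hw1 hw1a
        exact ⟨b, w0, hw0b.symm, contract_hasInduced G b w0
          (fun h => hnb (by rw [h]; exact hw0b)) hw0.1.symm hw0.2.1.symm hw0.2.2.1.symm
          hw1a hab hbc hw1c.symm
          hnb nac hw1.2.1 hac'
          (fun h => (hw1.2.1 h).elim) (fun _ => hno w0 w1 hw0 hw1)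
          (fun h => (hab.ne h).elim) (fun h => (hbc.ne' h).elim)⟩
    · have hall : ∀ w : V, (w ≠ a ∧ w ≠ b ∧ w ≠ c ∧ w ≠ d) → G.Adj w a ∧ G.Adj w b := by
        intro w hw
        constructor
        · by_contra hn; exact h4 ⟨w, hw, Or.inl hn⟩
        · by_contra hn; exact h4 ⟨w, hw, Or.inr hn⟩
      by_cases h5 : ∃ w1 : V, (w1 ≠ a ∧ w1 ≠ b ∧ w1 ≠ c ∧ w1 ≠ d) ∧ w1 ≠ w0
      · obtain ⟨w1, hw1, hne10⟩ := h5
        by_cases h6 : ∃ w2 : V, (w2 ≠ a ∧ w2 ≠ b ∧ w2 ≠ c ∧ w2 ≠ d) ∧ w2 ≠ w0 ∧ w2 ≠ w1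
        · obtain ⟨w2, hw2, h20, h21⟩ := h6
          refine Or.inr (Or.inr (Or.inr ?_))
          exact ⟨b, w2, (hall w2 hw2).2.symm, contract_hasInduced G b w2
            h20.symm hw2.1.symm h21.symm hw2.2.2.1.symm
            (hall w0 hw0).1 (hall w1 hw1).1.symm
            (hac_w w1 hw1 (hall w1 hw1).1) (hac_w w0 hw0 (hall w0 hw0).1).symm
            (hno w0 w1 hw0 hw1) nac hne10.symm hac'
            (fun h => (hw0.2.1 h).elim) (fun h => (hw1.2.1 h).elim)
            (fun h => (hab.ne h).elim) (fun h => (hbc.ne' h).elim)⟩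
        · -- exactly two outside vertices : E₂ ∨ C₄
          have huniq2 : ∀ w : V, (w ≠ a ∧ w ≠ b ∧ w ≠ c ∧ w ≠ d) → w ≠ w0 → w = w1 := by
            intro w hw hn
            by_contra hn1; exact h6 ⟨w, hw, hn, hn1⟩
          have hw1a := (hall w1 hw1).1
          have hw1b := (hall w1 hw1).2
          have hw1c := hac_w w1 hw1 hw1a
          have hw1d := hbd_w w1 hw1 hw1b
          refine Or.inr (Or.inr (Or.inl ?_))
          refine caseE2 G hab hbc hcd hda nac nbd hac' hbd'
            hw0a hw0b hw0c hw0d hw1a hw1b hw1c hw1d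
            (hno w0 w1 hw0 hw1) hne10.symm ?_
          intro x
          by_cases e1 : x = a
          · exact Or.inl e1
          by_cases e2 : x = b
          · exact Or.inr (Or.inl e2)
          by_cases e3 : x = c
          · exact Or.inr (Or.inr (Or.inl e3))
          by_cases e4 : x = d
          · exact Or.inr (Or.inr (Or.inr (Or.inl e4)))
          by_cases e5 : x = w0
          · exact Or.inr (Or.inr (Or.inr (Or.inr (Or.inl e5))))
          · exact Or.inr (Or.inr (Or.inr (Or.inr (Or.inr
              (huniq2 x ⟨e1, e2, e3, e4⟩ e5)))))
      · -- exactly one outside vertex : W₄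
        have huniq : ∀ w : V, (w ≠ a ∧ w ≠ b ∧ w ≠ c ∧ w ≠ d) → w = w0 := by
          intro w hw
          by_contra hn; exact h5 ⟨w, hw, hn⟩
        refine Or.inr (Or.inl ?_)
        refine caseW4 G hab hbc hcd hda nac nbd hac' hbd' hw0a hw0b hw0c hw0d ?_
        intro x
        by_cases e1 : x = a
        · exact Or.inl e1
        by_cases e2 : x = b
        · exact Or.inr (Or.inl e2)
        by_cases e3 : x = c
        · exact Or.inr (Or.inr (Or.inl e3))
        by_cases e4 : x = d
        · exact Or.inr (Or.inr (Or.inr (Or.inl e4)))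
        · exact Or.inr (Or.inr (Or.inr (Or.inr (huniq x ⟨e1, e2, e3, e4⟩))))
  · have h3n : ∀ w : V, (w ≠ a ∧ w ≠ b ∧ w ≠ c ∧ w ≠ d) → G.Adj w a → ¬G.Adj w b :=
      fun w hw h hb' => h3 ⟨w, hw, h, hb'⟩
    by_cases h7 : ∃ w : V, (w ≠ a ∧ w ≠ b ∧ w ≠ c ∧ w ≠ d) ∧ G.Adj w b
    · obtain ⟨w0, hw0, hw0b⟩ := h7
      have hw0na : ¬G.Adj w0 a := fun h => h3n w0 hw0 h hw0b
      have hw0d := hbd_w w0 hw0 hw0b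
      by_cases h8 : ∃ w : V, (w ≠ a ∧ w ≠ b ∧ w ≠ c ∧ w ≠ d) ∧ G.Adj w a
      · -- profiles {a,c} and {b,d} both occur : contract
        obtain ⟨w1, hw1, hw1a⟩ := h8
        have hw1nb : ¬G.Adj w1 b := h3n w1 hw1 hw1a
        refine Or.inr (Or.inr (Or.inr ?_))
        exact ⟨a, w1, hw1a.symm, contract_hasInduced G a w1
          hw1a.ne' hw1.2.1.symm (fun h => hw1nb (by rw [← h]; exact hw0b)) hw1.2.2.2.symm
          hab hw0b.symm hw0d hda
          (fun h => hw0na h.symm) nbd hw0.1.symm hbd'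
          (fun _ => hno w1 w0 hw1 hw0) (fun h => (hw0.1 h).elim)
          (fun h => (hab.ne' h).elim) (fun h => (hda.ne h).elim)⟩
      · -- every outside vertex has profile {b, d} : K_{2,l}
        have h8n : ∀ w : V, (w ≠ a ∧ w ≠ b ∧ w ≠ c ∧ w ≠ d) → ¬G.Adj w a :=
          fun w hw h => h8 ⟨w, hw, h⟩
        have hnc : ∀ w : V, (w ≠ a ∧ w ≠ b ∧ w ≠ c ∧ w ≠ d) → ¬G.Adj w c :=
          fun w hw h => h8n w hw (hca_w w hw h)
        have hwb : ∀ w : V, (w ≠ a ∧ w ≠ b ∧ w ≠ c ∧ w ≠ d) → G.Adj w b := by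
          intro w hw
          rcases hnbr w hw with h | h | h | h
          exacts [absurd h (h8n w hw), h, absurd h (hnc w hw), hdb_w w hw h]
        have hwd : ∀ w : V, (w ≠ a ∧ w ≠ b ∧ w ≠ c ∧ w ≠ d) → G.Adj w d :=
          fun w hw => hbd_w w hw (hwb w hw)
        refine Or.inl (caseK G b d hbd' a c hac' ?_ ?_ ?_)
        · rintro (h | h)
          exacts [hab.ne h, hda.ne' h]
        · rintro (h | h)
          exacts [hbc.ne' h, hcd.ne h]
        · refine charK G hbd' nbd ?_ ?_
          · intro x hxb hxd
            by_cases e1 : x = a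
            · rw [e1]; exact ⟨hab, had⟩
            by_cases e3 : x = c
            · rw [e3]; exact ⟨hcb, hcd⟩
            · exact ⟨hwb x ⟨e1, hxb, e3, hxd⟩, hwd x ⟨e1, hxb, e3, hxd⟩⟩
          · intro x y hxb hxd hyb hyd
            by_cases e1 : x = a
            · by_cases f1 : y = a
              · rw [e1, f1]; exact G.loopless.irrefl a
              by_cases f3 : y = c
              · rw [e1, f3]; exact nac
              · rw [e1]; exact fun h => h8n y ⟨f1, hyb, f3, hyd⟩ h.symm
            by_cases e3 : x = c
            · by_cases f1 : y = a
              · rw [e3, f1]; exact hca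
              by_cases f3 : y = c
              · rw [e3, f3]; exact G.loopless.irrefl c
              · rw [e3]; exact fun h => hnc y ⟨f1, hyb, f3, hyd⟩ h.symm
            · by_cases f1 : y = a
              · rw [f1]; exact h8n x ⟨e1, hxb, e3, hxd⟩
              by_cases f3 : y = c
              · rw [f3]; exact hnc x ⟨e1, hxb, e3, hxd⟩
              · exact hno x y ⟨e1, hxb, e3, hxd⟩ ⟨f1, hyb, f3, hyd⟩
    · -- every outside vertex has profile {a, c} (or none exists) : K_{2,l}
      have h7n : ∀ w : V, (w ≠ a ∧ w ≠ b ∧ w ≠ c ∧ w ≠ d) → ¬G.Adj w b :=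
        fun w hw h => h7 ⟨w, hw, h⟩
      have hnd : ∀ w : V, (w ≠ a ∧ w ≠ b ∧ w ≠ c ∧ w ≠ d) → ¬G.Adj w d :=
        fun w hw h => h7n w hw (hdb_w w hw h)
      have hwa : ∀ w : V, (w ≠ a ∧ w ≠ b ∧ w ≠ c ∧ w ≠ d) → G.Adj w a := by
        intro w hw
        rcases hnbr w hw with h | h | h | h
        exacts [h, absurd h (h7n w hw), hca_w w hw h, absurd h (hnd w hw)]
      have hwc : ∀ w : V, (w ≠ a ∧ w ≠ b ∧ w ≠ c ∧ w ≠ d) → G.Adj w c :=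
        fun w hw => hac_w w hw (hwa w hw)
      refine Or.inl (caseK G a c hac' b d hbd' ?_ ?_ ?_)
      · rintro (h | h)
        exacts [hab.ne' h, hbc.ne h]
      · rintro (h | h)
        exacts [hda.ne h, hcd.ne' h]
      · refine charK G hac' nac ?_ ?_
        · intro x hxa hxc
          by_cases e2 : x = b
          · rw [e2]; exact ⟨hba, hbc⟩
          by_cases e4 : x = d
          · rw [e4]; exact ⟨hda, hdc⟩
          · exact ⟨hwa x ⟨hxa, e2, hxc, e4⟩, hwc x ⟨hxa, e2, hxc, e4⟩⟩
        · intro x y hxa hxc hya hyc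
          by_cases e2 : x = b
          · by_cases f2 : y = b
            · rw [e2, f2]; exact G.loopless.irrefl b
            by_cases f4 : y = d
            · rw [e2, f4]; exact nbd
            · rw [e2]; exact fun h => h7n y ⟨hya, f2, hyc, f4⟩ h.symm
          by_cases e4 : x = d
          · by_cases f2 : y = b
            · rw [e4, f2]; exact hdb
            by_cases f4 : y = d
            · rw [e4, f4]; exact G.loopless.irrefl d
            · rw [e4]; exact fun h => hnd y ⟨hya, f2, hyc, f4⟩ h.symm
          · by_cases f2 : y = b
            · rw [f2]; exact h7n x ⟨hxa, e2, hxc, e4⟩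
            by_cases f4 : y = d
            · rw [f4]; exact hnd x ⟨hxa, e2, hxc, e4⟩
            · exact hno x y ⟨hxa, e2, hxc, e4⟩ ⟨hya, f2, hyc, f4⟩
end

section
/- Let G be a connected simple graph that is not isomorphic to any of the following exceptional graphs: K_{2,l} for l ≥ 2, W_4 = K_1 ∨ C_4, E_2 ∨ C_4, 2K_2, P_5, the hammer, or the butterfly. Then G is a split graph if and only if G/e is a split graph for every edge e ∈ E(G). -/
open SimpleGraph

/-- A graph is split if its vertex set partitions into a clique and an independent set. -/
def SimpleGraph.IsSplit {V : Type*} (G : SimpleGraph V) : Prop :=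
  ∃ K S : Set V, K ∪ S = Set.univ ∧ Disjoint K S ∧ G.IsClique K ∧ G.IsIndependentSet S

/-- `G` is one of the exceptional graphs of Figure 1: `K_{2,l}` (`l ≥ 2`),
`W₄ = K₁ ∨ C₄`, `E₂ ∨ C₄`, `2K₂`, `P₅`, the hammer, or the butterfly. -/
def IsExceptional {V : Type*} (G : SimpleGraph V) : Prop :=
  (∃ l : ℕ, 2 ≤ l ∧ Nonempty (G ≃g completeBipartiteGraph (Fin 2) (Fin l))) ∨
  Nonempty (G ≃g W4Graph) ∨ Nonempty (G ≃g E2JoinC4Graph) ∨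
  Nonempty (G ≃g twoK2) ∨ Nonempty (G ≃g pathGraph 5) ∨
  Nonempty (G ≃g hammerGraph) ∨ Nonempty (G ≃g butterflyGraph)

namespace StmtAux
section A
variable {V : Type*} {G : SimpleGraph V}


variable {V : Type*} {G : SimpleGraph V}

/-- induced C4 on cycle a-b-c-d -/
def Cfg4 (G : SimpleGraph V) (a b c d : V) : Prop :=
  G.Adj a b ∧ G.Adj b c ∧ G.Adj c d ∧ G.Adj d a ∧ ¬G.Adj a c ∧ ¬G.Adj b d ∧ a ≠ c ∧ b ≠ d

/-- induced 2K2 with edges ab, cd -/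
def Cfg2 (G : SimpleGraph V) (a b c d : V) : Prop :=
  G.Adj a b ∧ G.Adj c d ∧ ¬G.Adj a c ∧ ¬G.Adj a d ∧ ¬G.Adj b c ∧ ¬G.Adj b d ∧
  a ≠ c ∧ a ≠ d ∧ b ≠ c ∧ b ≠ d

/-- induced C5 on cycle a-b-c-d-e -/
def Cfg5 (G : SimpleGraph V) (a b c d e : V) : Prop :=
  G.Adj a b ∧ G.Adj b c ∧ G.Adj c d ∧ G.Adj d e ∧ G.Adj e a ∧
  ¬G.Adj a c ∧ ¬G.Adj b d ∧ ¬G.Adj c e ∧ ¬G.Adj d a ∧ ¬G.Adj e b ∧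
  a ≠ c ∧ b ≠ d ∧ c ≠ e ∧ d ≠ a ∧ e ≠ b

lemma mem_or {K S : Set V} (hU : K ∪ S = Set.univ) (x : V) : x ∈ K ∨ x ∈ S := by
  rw [← Set.mem_union, hU]; trivial

lemma Cfg4.not_split {a b c d : V} (h : Cfg4 G a b c d) : ¬ G.IsSplit := by
  obtain ⟨hab, hbc, hcd, hda, hac, hbd, hac', hbd'⟩ := h
  rintro ⟨K, S, hU, -, hK, hS⟩
  have h1 : a ∈ S ∨ c ∈ S := by
    rcases mem_or hU a with ha | ha
    · rcases mem_or hU c with hc | hc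
      · exact absurd (hK ha hc hac') hac
      · exact Or.inr hc
    · exact Or.inl ha
  have h2 : b ∈ S ∨ d ∈ S := by
    rcases mem_or hU b with hb | hb
    · rcases mem_or hU d with hd | hd
      · exact absurd (hK hb hd hbd') hbd
      · exact Or.inr hd
    · exact Or.inl hb
  rcases h1 with h1 | h1 <;> rcases h2 with h2 | h2
  · exact hS h1 h2 hab.ne hab
  · exact hS h2 h1 hda.ne hda
  · exact hS h2 h1 hbc.ne hbc
  · exact hS h1 h2 hcd.ne hcd

lemma Cfg2.not_split {a b c d : V} (h : Cfg2 G a b c d) : ¬ G.IsSplit := by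
  obtain ⟨hab, hcd, hac, had, hbc, hbd, h1, h2, h3, h4⟩ := h
  rintro ⟨K, S, hU, -, hK, hS⟩
  have e1 : a ∈ K ∨ b ∈ K := by
    rcases mem_or hU a with ha | ha
    · exact Or.inl ha
    · rcases mem_or hU b with hb | hb
      · exact Or.inr hb
      · exact absurd hab (hS ha hb hab.ne)
  have e2 : c ∈ K ∨ d ∈ K := by
    rcases mem_or hU c with hc | hc
    · exact Or.inl hc
    · rcases mem_or hU d with hd | hd
      · exact Or.inr hd
      · exact absurd hcd (hS hc hd hcd.ne)
  rcases e1 with e1 | e1 <;> rcases e2 with e2 | e2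
  · exact hac (hK e1 e2 h1)
  · exact had (hK e1 e2 h2)
  · exact hbc (hK e1 e2 h3)
  · exact hbd (hK e1 e2 h4)

lemma Cfg5.not_split {a b c d e : V} (h : Cfg5 G a b c d e) : ¬ G.IsSplit := by
  obtain ⟨hab, hbc, hcd, hde, hea, hac, hbd, hce, hda, heb, n1, n2, n3, n4, n5⟩ := h
  rintro ⟨K, S, hU, -, hK, hS⟩
  rcases mem_or hU a with ha | ha <;> rcases mem_or hU b with hb | hb <;>
    rcases mem_or hU c with hc | hc <;> rcases mem_or hU d with hd | hd <;>
    rcases mem_or hU e with he | he <;>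
  first
  | exact hS ha hb hab.ne hab
  | exact hS hb hc hbc.ne hbc
  | exact hS hc hd hcd.ne hcd
  | exact hS hd he hde.ne hde
  | exact hS he ha hea.ne hea
  | exact hac (hK ha hc n1)
  | exact hbd (hK hb hd n2)
  | exact hce (hK hc he n3)
  | exact hda (hK hd ha n4.symm).symm
  | exact heb (hK he hb n5.symm).symm


end A

section B
variable {V : Type*} {G : SimpleGraph V} {u v : V}



lemma contract_lift {x y : {z : V // z ≠ v}} (hx : x.1 ≠ u) (hy : y.1 ≠ u) :
    (G.contractEdge u v).Adj x y ↔ G.Adj x.1 y.1 := by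
  constructor
  · rintro ⟨hne, h | ⟨h1, -⟩ | ⟨h1, -⟩⟩
    · exact h
    · exact absurd h1 hx
    · exact absurd h1 hy
  · exact fun h => ⟨fun e => h.ne (congrArg Subtype.val e), Or.inl h⟩

lemma contract_merge {x : {z : V // z ≠ v}} (hu : (u : V) ≠ v) (hxu : x.1 ≠ u) :
    (G.contractEdge u v).Adj ⟨u, hu⟩ x ↔ (G.Adj u x.1 ∨ G.Adj v x.1) := by
  constructor
  · rintro ⟨hne, h | ⟨-, h2⟩ | ⟨h1, -⟩⟩
    · exact Or.inl h
    · exact Or.inr h2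
    · exact absurd h1.symm (Ne.symm hxu)
  · rintro (h | h)
    · exact ⟨fun e => hxu (congrArg Subtype.val e).symm, Or.inl h⟩
    · exact ⟨fun e => hxu (congrArg Subtype.val e).symm, Or.inr (Or.inl ⟨rfl, h⟩)⟩

/-- a split graph stays split after contracting an edge -/
lemma split_contract (hsp : G.IsSplit) (huv : G.Adj u v) :
    (G.contractEdge u v).IsSplit := by
  obtain ⟨K, S, hU, hdis, hK, hS⟩ := hsp
  by_cases hvK : v ∈ K
  · by_cases huK : (u:V) ∈ K
    · -- both in K
      refine ⟨{x | x.1 ∈ K}, {x | x.1 ∈ S}, ?_, ?_, ?_, ?_⟩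
      · ext x; simp only [Set.mem_union, Set.mem_setOf_eq, Set.mem_univ, iff_true]
        exact mem_or hU x.1
      · rw [Set.disjoint_left]; intro x hx hx2
        exact Set.disjoint_left.mp hdis hx hx2
      · intro x hx y hy hne
        exact ⟨hne, Or.inl (hK hx hy (fun e => hne (Subtype.ext e)))⟩
      · intro x hx y hy hne h
        rcases h.2 with h' | ⟨h1, h2⟩ | ⟨h1, h2⟩
        · exact hS hx hy (fun e => hne (Subtype.ext e)) h'
        · exact Set.disjoint_left.mp hdis huK (h1 ▸ hx)
        · exact Set.disjoint_left.mp hdis huK (h1 ▸ hy)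
    · -- v ∈ K, u ∈ S
      have huS : (u:V) ∈ S := (mem_or hU u).resolve_left huK
      refine ⟨{x | x.1 ∈ K ∨ x.1 = u}, {x | x.1 ∈ S ∧ x.1 ≠ u}, ?_, ?_, ?_, ?_⟩
      · ext x; simp only [Set.mem_union, Set.mem_setOf_eq, Set.mem_univ, iff_true]
        rcases mem_or hU x.1 with h | h
        · exact Or.inl (Or.inl h)
        · by_cases hxu : x.1 = u
          · exact Or.inl (Or.inr hxu)
          · exact Or.inr ⟨h, hxu⟩
      · rw [Set.disjoint_left]; rintro x (hx | hx) ⟨hx2, hx3⟩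
        · exact Set.disjoint_left.mp hdis hx hx2
        · exact hx3 hx
      · rintro x (hx | hx) y (hy | hy) hne
        · exact ⟨hne, Or.inl (hK hx hy (fun e => hne (Subtype.ext e)))⟩
        · exact ⟨hne, Or.inr (Or.inr ⟨hy, G.adj_symm (hK hx hvK x.2)⟩)⟩
        · exact ⟨hne, Or.inr (Or.inl ⟨hx, hK hvK hy (Ne.symm y.2)⟩)⟩
        · exact absurd (Subtype.ext (hx.trans hy.symm)) hne
      · rintro x ⟨hx, hxu⟩ y ⟨hy, hyu⟩ hne h
        rcases h.2 with h' | ⟨h1, -⟩ | ⟨h1, -⟩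
        · exact hS hx hy (fun e => hne (Subtype.ext e)) h'
        · exact hxu h1
        · exact hyu h1
  · -- v ∈ S : u must be in K or S; if u ∈ S then independence violated
    have hvS : v ∈ S := (mem_or hU v).resolve_left hvK
    refine ⟨{x | x.1 ∈ K}, {x | x.1 ∈ S}, ?_, ?_, ?_, ?_⟩
    · ext x; simp only [Set.mem_union, Set.mem_setOf_eq, Set.mem_univ, iff_true]
      exact mem_or hU x.1
    · rw [Set.disjoint_left]; intro x hx hx2
      exact Set.disjoint_left.mp hdis hx hx2
    · intro x hx y hy hne
      exact ⟨hne, Or.inl (hK hx hy (fun e => hne (Subtype.ext e)))⟩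
    · intro x hx y hy hne h
      have huK : (u:V) ∈ K := by
        rcases mem_or hU u with h' | h'
        · exact h'
        · exact absurd huv (hS h' hvS huv.ne)
      rcases h.2 with h' | ⟨h1, -⟩ | ⟨h1, -⟩
      · exact hS hx hy (fun e => hne (Subtype.ext e)) h'
      · exact Set.disjoint_left.mp hdis huK (h1 ▸ hx)
      · exact Set.disjoint_left.mp hdis huK (h1 ▸ hy)


end B

section C
open Classical in
theorem foldesHammer [Fintype V] (G : SimpleGraph V)
    (h2 : ∀ a b c d, ¬ Cfg2 G a b c d)
    (h4 : ∀ a b c d, ¬ Cfg4 G a b c d)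
    (h5 : ∀ a b c d e, ¬ Cfg5 G a b c d e) : G.IsSplit := by
  classical
  set eW : Finset V → ℕ := fun U => ∑ x ∈ U, ∑ y ∈ U, if G.Adj x y then 1 else 0 with heW
  have eW_insert : ∀ (T : Finset V) (w : V), w ∉ T →
      eW (insert w T) = eW T + 2 * (T.filter (G.Adj w)).card := by
    intro T w hw
    rw [heW]
    simp only [Finset.sum_insert hw]
    have h1 : ∀ x : V, (∑ y ∈ insert w T, if G.Adj x y then 1 else 0)
        = (if G.Adj x w then 1 else 0) + ∑ y ∈ T, if G.Adj x y then 1 else 0 := by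
      intro x; rw [Finset.sum_insert hw]
    simp only [h1, Finset.sum_add_distrib]
    have hww : (if G.Adj w w then (1:ℕ) else 0) = 0 := by simp
    have hb : (∑ y ∈ T, if G.Adj w y then (1:ℕ) else 0) = (T.filter (G.Adj w)).card := by
      rw [Finset.sum_boole, Nat.cast_id]
    have hb2 : (∑ x ∈ T, if G.Adj x w then (1:ℕ) else 0) = (T.filter (G.Adj w)).card := by
      rw [Finset.sum_boole, Nat.cast_id]
      congr 1
      apply Finset.filter_congr
      intro z _
      simp [G.adj_comm]
    rw [hww, hb, hb2]
    ring
  -- maximum clique size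
  have hclEmpty : (∅ : Finset V) ∈ Finset.univ.filter (fun K : Finset V => G.IsClique (K : Set V)) := by
    simp [Set.pairwise_empty, SimpleGraph.IsClique]
  obtain ⟨K₁, hK₁mem, hK₁max⟩ :=
    Finset.exists_max_image (Finset.univ.filter (fun K : Finset V => G.IsClique (K : Set V)))
      Finset.card ⟨∅, hclEmpty⟩
  set t := (Finset.univ.filter (fun K : Finset V => G.IsClique (K : Set V))).filter
      (fun K => K.card = K₁.card) with ht
  obtain ⟨K, hKt, hKmin⟩ := Finset.exists_min_image t (fun K => eW (Finset.univ \ K))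
    ⟨K₁, by simp [ht, hK₁mem]⟩
  have hKcl : G.IsClique (K : Set V) := by
    have := hKt; rw [ht] at this; simp at this; exact this.1
  have hKcard : K.card = K₁.card := by
    have := hKt; rw [ht] at this; simp at this; exact this.2
  set S := Finset.univ \ K with hS
  by_cases hind : G.IsIndependentSet (S : Set V)
  · refine ⟨(K : Set V), (S : Set V), ?_, ?_, hKcl, hind⟩
    · ext x; simp [hS]
    · rw [Set.disjoint_left]; intro x hx hx2
      have h1 := Finset.mem_coe.mp hx2
      rw [hS, Finset.mem_sdiff] at h1
      exact h1.2 (Finset.mem_coe.mp hx)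
  · -- there is an edge inside S
    rw [SimpleGraph.IsIndependentSet, Set.Pairwise] at hind
    push_neg at hind
    obtain ⟨x, hx, y, hy, hxy, hadj⟩ := hind
    replace hx : x ∈ S := Finset.mem_coe.mp hx
    replace hy : y ∈ S := Finset.mem_coe.mp hy
    -- basic facts about S
    have hSmem : ∀ z, z ∈ S ↔ z ∉ K := by intro z; rw [hS, Finset.mem_sdiff]; simp
    -- every vertex of S misses some vertex of K
    set M : V → Finset V := fun z => K.filter (fun k => ¬ G.Adj z k) with hM
    have hMsub : ∀ z, M z ⊆ K := fun z => Finset.filter_subset _ _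
    have hMmem : ∀ z k, k ∈ M z ↔ k ∈ K ∧ ¬ G.Adj z k := by
      intro z k; rw [hM]; simp
    have key1 : ∀ z, z ∈ S → (M z).Nonempty := by
      intro z hz
      rw [Finset.nonempty_iff_ne_empty]
      intro hemp
      have hzK : z ∉ K := (hSmem z).mp hz
      have hcl : G.IsClique ((insert z K : Finset V) : Set V) := by
        rw [Finset.coe_insert]
        apply hKcl.insert
        intro b hb hne
        by_contra hnadj
        have : b ∈ M z := (hMmem z b).mpr ⟨hb, fun h => hnadj h⟩
        rw [hemp] at this; exact absurd this (Finset.notMem_empty b)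
      have hle := hK₁max (insert z K) (Finset.mem_filter.mpr ⟨Finset.mem_univ _, hcl⟩)
      rw [Finset.card_insert_of_notMem hzK, hKcard] at hle
      omega
    -- the key edge lemma
    have key2 : ∀ p q, p ∈ S → q ∈ S → G.Adj p q →
        ∃ k, (M p = {k} ∧ k ∈ M q) ∨ (M q = {k} ∧ k ∈ M p) := by
      intro p q hp hq hpq
      obtain ⟨kp, hkp⟩ := key1 p hp
      obtain ⟨kq, hkq⟩ := key1 q hq
      have hinter : ∀ k k', k ∈ M p → k ∈ M q → k' ∈ M p → k' ∈ M q → k = k' := by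
        intro k k' m1 m2 m3 m4
        by_contra hne
        rw [hMmem] at m1 m2 m3 m4
        exact h2 p q k k' ⟨hpq, hKcl m1.1 m3.1 hne, m1.2, m3.2, m2.2, m4.2,
          fun e => ((hSmem p).mp hp) (e ▸ m1.1), fun e => ((hSmem p).mp hp) (e ▸ m3.1),
          fun e => ((hSmem q).mp hq) (e ▸ m1.1), fun e => ((hSmem q).mp hq) (e ▸ m3.1)⟩
      have hsub : M p ⊆ M q ∨ M q ⊆ M p := by
        by_contra hc
        push_neg at hc
        obtain ⟨hc1, hc2⟩ := hc
        rw [Finset.not_subset] at hc1 hc2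
        obtain ⟨r, hr1, hr2⟩ := hc1
        obtain ⟨w, hw1, hw2⟩ := hc2
        rw [hMmem] at hr1 hw1
        have hqr : G.Adj q r := by
          by_contra hn
          exact hr2 ((hMmem q r).mpr ⟨hr1.1, hn⟩)
        have hpw : G.Adj p w := by
          by_contra hn
          exact hw2 ((hMmem p w).mpr ⟨hw1.1, hn⟩)
        have hrw : r ≠ w := by rintro rfl; exact hr1.2 hpw
        exact h4 p q r w ⟨hpq, hqr, hKcl hr1.1 hw1.1 hrw, hpw.symm, hr1.2, hw1.2,
          fun e => ((hSmem p).mp hp) (e ▸ hr1.1), fun e => ((hSmem q).mp hq) (e ▸ hw1.1)⟩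
      rcases hsub with hsub | hsub
      · refine ⟨kp, Or.inl ⟨?_, hsub hkp⟩⟩
        ext k
        simp only [Finset.mem_singleton]
        constructor
        · intro hk; exact hinter k kp hk (hsub hk) hkp (hsub hkp)
        · rintro rfl; exact hkp
      · refine ⟨kq, Or.inr ⟨?_, hsub hkq⟩⟩
        ext k
        simp only [Finset.mem_singleton]
        constructor
        · intro hk; exact hinter k kq (hsub hk) hk (hsub hkq) hkq
        · rintro rfl; exact hkq
    -- the swap step
    have step : ∀ p q k, p ∈ S → q ∈ S → G.Adj p q → M p = {k} → k ∈ M q → False := by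
      intro p q k hp hq hpq hMp hkq
      have hkK : k ∈ K := hMsub p (hMp ▸ Finset.mem_singleton_self k)
      have hpk : ¬ G.Adj p k := ((hMmem p k).mp (hMp ▸ Finset.mem_singleton_self k)).2
      have hqk : ¬ G.Adj q k := ((hMmem q k).mp hkq).2
      have hpK : p ∉ K := (hSmem p).mp hp
      have hqK : q ∉ K := (hSmem q).mp hq
      have hpk' : p ≠ k := fun e => hpK (e ▸ hkK)
      have hqk' : q ≠ k := fun e => hqK (e ▸ hkK)
      -- p is adjacent to everything in K except k
      have hpadj : ∀ z, z ∈ K → z ≠ k → G.Adj p z := by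
        intro z hz hzk
        by_contra hn
        have : z ∈ M p := (hMmem p z).mpr ⟨hz, hn⟩
        rw [hMp, Finset.mem_singleton] at this
        exact hzk this
      set K' : Finset V := insert p (K.erase k) with hK'
      have hpKe : p ∉ K.erase k := fun h => hpK (Finset.mem_of_mem_erase h)
      have hK'cl : G.IsClique (K' : Set V) := by
        rw [hK', Finset.coe_insert]
        refine IsClique.insert (hKcl.subset ?_) ?_
        · exact Finset.coe_subset.mpr (Finset.erase_subset k K)
        · intro b hb hne
          exact hpadj b (Finset.mem_of_mem_erase (Finset.mem_coe.mp hb))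
            (Finset.ne_of_mem_erase (Finset.mem_coe.mp hb))
      have hK'card : K'.card = K.card := by
        rw [hK', Finset.card_insert_of_notMem hpKe, Finset.card_erase_of_mem hkK]
        have : 0 < K.card := Finset.card_pos.mpr ⟨k, hkK⟩
        omega
      have hK't : K' ∈ t := by
        rw [ht]
        simp only [Finset.mem_filter, Finset.mem_univ, true_and]
        exact ⟨hK'cl, by rw [hK'card, hKcard]⟩
      set T : Finset V := S.erase p with hT
      have hxT : p ∉ T := Finset.notMem_erase p S
      have hkT : k ∉ T := fun h => ((hSmem k).mp (Finset.mem_of_mem_erase h)) hkK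
      have hST : S = insert p T := by rw [hT, Finset.insert_erase hp]
      have hST' : Finset.univ \ K' = insert k T := by
        ext z
        rw [Finset.mem_sdiff, hK', Finset.mem_insert, Finset.mem_insert, Finset.mem_erase,
          hT, Finset.mem_erase]
        constructor
        · rintro ⟨-, hz⟩
          push_neg at hz
          obtain ⟨hz1, hz2⟩ := hz
          by_cases hzk : z = k
          · exact Or.inl hzk
          · exact Or.inr ⟨hz1, (hSmem z).mpr (hz2 hzk)⟩
        · rintro (rfl | ⟨hz1, hz2⟩)
          · refine ⟨Finset.mem_univ _, ?_⟩
            push_neg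
            refine ⟨fun e => absurd e.symm hpk', fun h => absurd rfl h⟩
          · exact ⟨Finset.mem_univ _, by push_neg; exact ⟨hz1, fun _ => (hSmem z).mp hz2⟩⟩
      have hmin2 := hKmin K' hK't
      rw [hST'] at hmin2
      rw [show eW S = eW (insert p T) by rw [← hST]] at hmin2
      rw [eW_insert T p hxT, eW_insert T k hkT] at hmin2
      have hNle : (T.filter (G.Adj p)).card ≤ (T.filter (G.Adj k)).card := by omega
      have hNp : 0 < (T.filter (G.Adj p)).card := by
        apply Finset.card_pos.mpr
        exact ⟨q, Finset.mem_filter.mpr ⟨Finset.mem_erase.mpr ⟨hpq.ne', hq⟩, hpq⟩⟩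
      obtain ⟨z, hz⟩ := Finset.card_pos.mp (lt_of_lt_of_le hNp hNle)
      rw [Finset.mem_filter] at hz
      obtain ⟨hzT, hkz⟩ := hz
      have hzS : z ∈ S := Finset.mem_of_mem_erase hzT
      have hzp : z ≠ p := Finset.ne_of_mem_erase hzT
      have hzq : z ≠ q := fun e => hqk (e ▸ hkz).symm
      have hkMz : k ∉ M z := fun h => ((hMmem z k).mp h).2 hkz.symm
      by_cases hpz : G.Adj p z
      · obtain ⟨k', hk'⟩ := key2 p z hp hzS hpz
        rcases hk' with ⟨hk'1, hk'2⟩ | ⟨hk'1, hk'2⟩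
        · rw [hMp] at hk'1
          have : k = k' := by rwa [Finset.singleton_inj] at hk'1
          exact hkMz (this ▸ hk'2)
        · rw [hMp, Finset.mem_singleton] at hk'2
          subst hk'2
          exact hkMz (hk'1 ▸ Finset.mem_singleton_self k')
      · by_cases hqz : G.Adj q z
        · obtain ⟨l, hl⟩ := key2 q z hq hzS hqz
          rcases hl with ⟨hl1, hl2⟩ | ⟨hl1, hl2⟩
          · rw [hl1, Finset.mem_singleton] at hkq
            exact hkMz (hkq ▸ hl2)
          · -- M z = {l}, l ∈ M q : C5
            have hlK : l ∈ K := hMsub q hl2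
            have hlq : ¬ G.Adj q l := ((hMmem q l).mp hl2).2
            have hlz : ¬ G.Adj z l := ((hMmem z l).mp (hl1 ▸ Finset.mem_singleton_self l)).2
            have hlk : l ≠ k := fun e => hkMz (e ▸ hl1 ▸ Finset.mem_singleton_self l)
            have hpl : G.Adj p l := hpadj l hlK hlk
            exact h5 p q z k l ⟨hpq, hqz, hkz.symm, hKcl hkK hlK (Ne.symm hlk), hpl.symm,
              hpz, hqk, hlz, fun h => hpk h.symm, fun h => hlq h.symm,
              Ne.symm hzp, hqk', fun e => ((hSmem z).mp hzS) (e ▸ hlK),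
              Ne.symm hpk', fun e => ((hSmem q).mp hq) (e ▸ hlK)⟩
        · exact h2 p q k z ⟨hpq, hkz, hpk, hpz, hqk, hqz, hpk', fun e => hzp e.symm,
            hqk', fun e => hzq e.symm⟩
    -- conclude
    obtain ⟨k, hk⟩ := key2 x y hx hy hadj
    rcases hk with ⟨h1, h2'⟩ | ⟨h1, h2'⟩
    · exact (step x y k hx hy hadj h1 h2').elim
    · exact (step y x k hy hx hadj.symm h1 h2').elim


end C

section E
variable {V : Type*} [DecidableEq V] {G : SimpleGraph V}


set_option maxHeartbeats 2000000 in
lemma iso_W4 (a b c d z : V)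
    (cov : ∀ w : V, w = a ∨ w = b ∨ w = c ∨ w = d ∨ w = z)
    (hab : G.Adj a b) (hbc : G.Adj b c) (hcd : G.Adj c d) (hda : G.Adj d a)
    (hza : G.Adj z a) (hzb : G.Adj z b) (hzc : G.Adj z c) (hzd : G.Adj z d)
    (nac : ¬G.Adj a c) (nbd : ¬G.Adj b d) (neac : a ≠ c) (nebd : b ≠ d) :
    Nonempty (G ≃g W4Graph) := by
  have n1 : a ≠ b := hab.ne
  have n2 : b ≠ c := hbc.ne
  have n3 : c ≠ d := hcd.ne
  have n4 : d ≠ a := hda.ne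
  have n5 : z ≠ a := hza.ne
  have n6 : z ≠ b := hzb.ne
  have n7 : z ≠ c := hzc.ne
  have n8 : z ≠ d := hzd.ne
  have m1 := n1.symm; have m2 := n2.symm; have m3 := n3.symm; have m4 := n4.symm
  have m5 := n5.symm; have m6 := n6.symm; have m7 := n7.symm; have m8 := n8.symm
  have m9 := neac.symm; have m10 := nebd.symm
  refine ⟨SimpleGraph.Iso.symm ⟨⟨![a,b,c,d,z],
    fun w => if w = a then 0 else if w = b then 1 else if w = c then 2 else if w = d then 3
      else 4, ?_, ?_⟩, ?_⟩⟩
  · intro i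
    fin_cases i <;>
      simp [n1, n2, n3, n4, n5, n6, n7, n8, m1, m2, m3, m4, m5, m6, m7, m8, neac, nebd, m9, m10]
  · intro w
    rcases cov w with rfl | rfl | rfl | rfl | rfl <;>
      simp [n1, n2, n3, n4, n5, n6, n7, n8, m1, m2, m3, m4, m5, m6, m7, m8, neac, nebd, m9, m10]
  · intro i j
    fin_cases i <;> fin_cases j <;>
      first
      | exact iff_of_false G.irrefl (by simp [W4Graph])
      | exact iff_of_true ‹_› (by simp [W4Graph, fromEdgeSet_adj])
      | exact iff_of_true (G.adj_symm ‹_›) (by simp [W4Graph, fromEdgeSet_adj])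
      | exact iff_of_false ‹_› (by simp [W4Graph])
      | exact iff_of_false (fun h' => absurd h'.symm ‹_›) (by simp [W4Graph])


end E

section E2
variable {V : Type*} [DecidableEq V] {G : SimpleGraph V}


set_option maxHeartbeats 2000000 in
lemma iso_P5 (v0 v1 v2 v3 v4 : V)
    (cov : ∀ w : V, w = v0 ∨ w = v1 ∨ w = v2 ∨ w = v3 ∨ w = v4)
    (h01 : G.Adj v0 v1) (h12 : G.Adj v1 v2) (h23 : G.Adj v2 v3) (h34 : G.Adj v3 v4)
    (n02 : ¬G.Adj v0 v2) (n03 : ¬G.Adj v0 v3) (n04 : ¬G.Adj v0 v4)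
    (n13 : ¬G.Adj v1 v3) (n14 : ¬G.Adj v1 v4) (n24 : ¬G.Adj v2 v4)
    (e02 : v0 ≠ v2) (e03 : v0 ≠ v3) (e04 : v0 ≠ v4)
    (e13 : v1 ≠ v3) (e14 : v1 ≠ v4) (e24 : v2 ≠ v4) :
    Nonempty (G ≃g pathGraph 5) := by
  have e01 : v0 ≠ v1 := h01.ne
  have e12 : v1 ≠ v2 := h12.ne
  have e23 : v2 ≠ v3 := h23.ne
  have e34 : v3 ≠ v4 := h34.ne
  have m1 := e01.symm; have m2 := e12.symm; have m3 := e23.symm; have m4 := e34.symm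
  have m5 := e02.symm; have m6 := e03.symm; have m7 := e04.symm; have m8 := e13.symm
  have m9 := e14.symm; have m10 := e24.symm
  refine ⟨SimpleGraph.Iso.symm ⟨⟨![v0,v1,v2,v3,v4],
    fun w => if w = v0 then 0 else if w = v1 then 1 else if w = v2 then 2 else if w = v3 then 3
      else 4, ?_, ?_⟩, ?_⟩⟩
  · intro i
    fin_cases i <;>
      simp [e01, e12, e23, e34, e02, e03, e04, e13, e14, e24,
        m1, m2, m3, m4, m5, m6, m7, m8, m9, m10]
  · intro w
    rcases cov w with rfl | rfl | rfl | rfl | rfl <;>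
      simp [e01, e12, e23, e34, e02, e03, e04, e13, e14, e24,
        m1, m2, m3, m4, m5, m6, m7, m8, m9, m10]
  · intro i j
    fin_cases i <;> fin_cases j <;>
      first
      | exact iff_of_false G.irrefl (by simp only [pathGraph_adj]; decide)
      | exact iff_of_true ‹_› (by simp only [pathGraph_adj]; decide)
      | exact iff_of_true (G.adj_symm ‹_›) (by simp only [pathGraph_adj]; decide)
      | exact iff_of_false ‹_› (by simp only [pathGraph_adj]; decide)
      | exact iff_of_false (fun h' => absurd h'.symm ‹_›) (by simp only [pathGraph_adj]; decide)

set_option maxHeartbeats 2000000 in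
lemma iso_hammer (v0 v1 v2 v3 v4 : V)
    (cov : ∀ w : V, w = v0 ∨ w = v1 ∨ w = v2 ∨ w = v3 ∨ w = v4)
    (h01 : G.Adj v0 v1) (h02 : G.Adj v0 v2) (h12 : G.Adj v1 v2)
    (h23 : G.Adj v2 v3) (h34 : G.Adj v3 v4)
    (n03 : ¬G.Adj v0 v3) (n04 : ¬G.Adj v0 v4)
    (n13 : ¬G.Adj v1 v3) (n14 : ¬G.Adj v1 v4) (n24 : ¬G.Adj v2 v4)
    (e03 : v0 ≠ v3) (e04 : v0 ≠ v4) (e13 : v1 ≠ v3) (e14 : v1 ≠ v4) (e24 : v2 ≠ v4) :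
    Nonempty (G ≃g hammerGraph) := by
  have e01 : v0 ≠ v1 := h01.ne
  have e02 : v0 ≠ v2 := h02.ne
  have e12 : v1 ≠ v2 := h12.ne
  have e23 : v2 ≠ v3 := h23.ne
  have e34 : v3 ≠ v4 := h34.ne
  have m1 := e01.symm; have m2 := e12.symm; have m3 := e23.symm; have m4 := e34.symm
  have m5 := e02.symm; have m6 := e03.symm; have m7 := e04.symm; have m8 := e13.symm
  have m9 := e14.symm; have m10 := e24.symm
  refine ⟨SimpleGraph.Iso.symm ⟨⟨![v0,v1,v2,v3,v4],
    fun w => if w = v0 then 0 else if w = v1 then 1 else if w = v2 then 2 else if w = v3 then 3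
      else 4, ?_, ?_⟩, ?_⟩⟩
  · intro i
    fin_cases i <;>
      simp [e01, e12, e23, e34, e02, e03, e04, e13, e14, e24,
        m1, m2, m3, m4, m5, m6, m7, m8, m9, m10]
  · intro w
    rcases cov w with rfl | rfl | rfl | rfl | rfl <;>
      simp [e01, e12, e23, e34, e02, e03, e04, e13, e14, e24,
        m1, m2, m3, m4, m5, m6, m7, m8, m9, m10]
  · intro i j
    fin_cases i <;> fin_cases j <;>
      first
      | exact iff_of_false G.irrefl (by simp [hammerGraph])
      | exact iff_of_true ‹_› (by simp [hammerGraph, fromEdgeSet_adj])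
      | exact iff_of_true (G.adj_symm ‹_›) (by simp [hammerGraph, fromEdgeSet_adj])
      | exact iff_of_false ‹_› (by simp [hammerGraph])
      | exact iff_of_false (fun h' => absurd h'.symm ‹_›) (by simp [hammerGraph])

set_option maxHeartbeats 2000000 in
lemma iso_butterfly (v0 v1 v2 v3 v4 : V)
    (cov : ∀ w : V, w = v0 ∨ w = v1 ∨ w = v2 ∨ w = v3 ∨ w = v4)
    (h01 : G.Adj v0 v1) (h02 : G.Adj v0 v2) (h12 : G.Adj v1 v2)
    (h23 : G.Adj v2 v3) (h24 : G.Adj v2 v4) (h34 : G.Adj v3 v4)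
    (n03 : ¬G.Adj v0 v3) (n04 : ¬G.Adj v0 v4)
    (n13 : ¬G.Adj v1 v3) (n14 : ¬G.Adj v1 v4)
    (e03 : v0 ≠ v3) (e04 : v0 ≠ v4) (e13 : v1 ≠ v3) (e14 : v1 ≠ v4) :
    Nonempty (G ≃g butterflyGraph) := by
  have e01 : v0 ≠ v1 := h01.ne
  have e02 : v0 ≠ v2 := h02.ne
  have e12 : v1 ≠ v2 := h12.ne
  have e23 : v2 ≠ v3 := h23.ne
  have e24 : v2 ≠ v4 := h24.ne
  have e34 : v3 ≠ v4 := h34.ne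
  have m1 := e01.symm; have m2 := e12.symm; have m3 := e23.symm; have m4 := e34.symm
  have m5 := e02.symm; have m6 := e03.symm; have m7 := e04.symm; have m8 := e13.symm
  have m9 := e14.symm; have m10 := e24.symm
  refine ⟨SimpleGraph.Iso.symm ⟨⟨![v0,v1,v2,v3,v4],
    fun w => if w = v0 then 0 else if w = v1 then 1 else if w = v2 then 2 else if w = v3 then 3
      else 4, ?_, ?_⟩, ?_⟩⟩
  · intro i
    fin_cases i <;>
      simp [e01, e12, e23, e34, e02, e03, e04, e13, e14, e24,
        m1, m2, m3, m4, m5, m6, m7, m8, m9, m10]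
  · intro w
    rcases cov w with rfl | rfl | rfl | rfl | rfl <;>
      simp [e01, e12, e23, e34, e02, e03, e04, e13, e14, e24,
        m1, m2, m3, m4, m5, m6, m7, m8, m9, m10]
  · intro i j
    fin_cases i <;> fin_cases j <;>
      first
      | exact iff_of_false G.irrefl (by simp [butterflyGraph])
      | exact iff_of_true ‹_› (by simp [butterflyGraph, fromEdgeSet_adj])
      | exact iff_of_true (G.adj_symm ‹_›) (by simp [butterflyGraph, fromEdgeSet_adj])
      | exact iff_of_false ‹_› (by simp [butterflyGraph])
      | exact iff_of_false (fun h' => absurd h'.symm ‹_›) (by simp [butterflyGraph])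

set_option maxHeartbeats 4000000 in
lemma iso_E2 (a b c d z1 z2 : V)
    (cov : ∀ w : V, w = a ∨ w = b ∨ w = c ∨ w = d ∨ w = z1 ∨ w = z2)
    (hab : G.Adj a b) (hbc : G.Adj b c) (hcd : G.Adj c d) (hda : G.Adj d a)
    (h1a : G.Adj z1 a) (h1b : G.Adj z1 b) (h1c : G.Adj z1 c) (h1d : G.Adj z1 d)
    (h2a : G.Adj z2 a) (h2b : G.Adj z2 b) (h2c : G.Adj z2 c) (h2d : G.Adj z2 d)
    (nac : ¬G.Adj a c) (nbd : ¬G.Adj b d) (nzz : ¬G.Adj z1 z2)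
    (eac : a ≠ c) (ebd : b ≠ d) (ezz : z1 ≠ z2) :
    Nonempty (G ≃g E2JoinC4Graph) := by
  have e01 : a ≠ b := hab.ne
  have e12 : b ≠ c := hbc.ne
  have e23 : c ≠ d := hcd.ne
  have e30 : d ≠ a := hda.ne
  have f1 : z1 ≠ a := h1a.ne
  have f2 : z1 ≠ b := h1b.ne
  have f3 : z1 ≠ c := h1c.ne
  have f4 : z1 ≠ d := h1d.ne
  have f5 : z2 ≠ a := h2a.ne
  have f6 : z2 ≠ b := h2b.ne
  have f7 : z2 ≠ c := h2c.ne
  have f8 : z2 ≠ d := h2d.ne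
  have m1 := e01.symm; have m2 := e12.symm; have m3 := e23.symm; have m4 := e30.symm
  have m5 := eac.symm; have m6 := ebd.symm; have m7 := ezz.symm
  have g1 := f1.symm; have g2 := f2.symm; have g3 := f3.symm; have g4 := f4.symm
  have g5 := f5.symm; have g6 := f6.symm; have g7 := f7.symm; have g8 := f8.symm
  have V4 : ![a,b,c,d,z1,z2] 4 = z1 := rfl
  have V5 : ![a,b,c,d,z1,z2] 5 = z2 := rfl
  refine ⟨SimpleGraph.Iso.symm ⟨⟨![a,b,c,d,z1,z2],
    fun w => if w = a then 0 else if w = b then 1 else if w = c then 2 else if w = d then 3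
      else if w = z1 then 4 else 5, ?_, ?_⟩, ?_⟩⟩
  · intro i
    fin_cases i <;>
      simp [e01, e12, e23, e30, eac, ebd, ezz, f1, f2, f3, f4, f5, f6, f7, f8,
        m1, m2, m3, m4, m5, m6, m7, g1, g2, g3, g4, g5, g6, g7, g8, V4, V5] <;> try rfl
  · intro w
    rcases cov w with rfl | rfl | rfl | rfl | rfl | rfl <;>
      simp [e01, e12, e23, e30, eac, ebd, ezz, f1, f2, f3, f4, f5, f6, f7, f8,
        m1, m2, m3, m4, m5, m6, m7, g1, g2, g3, g4, g5, g6, g7, g8, V4, V5] <;> try rfl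
  · intro i j
    fin_cases i <;> fin_cases j <;>
      first
      | exact iff_of_false G.irrefl (by simp [E2JoinC4Graph])
      | exact iff_of_true ‹_› (by simp [E2JoinC4Graph, fromEdgeSet_adj])
      | exact iff_of_true (G.adj_symm ‹_›) (by simp [E2JoinC4Graph, fromEdgeSet_adj])
      | exact iff_of_false ‹_› (by simp [E2JoinC4Graph])
      | exact iff_of_false (fun h' => absurd h'.symm ‹_›) (by simp [E2JoinC4Graph])


end E2

section E3
variable {V : Type*} [DecidableEq V] {G : SimpleGraph V}


lemma iso_K2l [Fintype V] (a c b d : V) (hac : a ≠ c) (hbd : b ≠ d)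
    (hba : b ≠ a) (hbc : b ≠ c) (hda : d ≠ a) (hdc : d ≠ c)
    (hchar : ∀ x y : V, G.Adj x y ↔
      (((x = a ∨ x = c) ∧ ¬(y = a ∨ y = c)) ∨ (¬(x = a ∨ x = c) ∧ (y = a ∨ y = c)))) :
    ∃ l : ℕ, 2 ≤ l ∧ Nonempty (G ≃g completeBipartiteGraph (Fin 2) (Fin l)) := by
  classical
  set P : Set V := {a, c} with hP
  have hPiff : ∀ x : V, x ∈ P ↔ (x = a ∨ x = c) := by intro x; simp [hP]
  -- the left part equiv
  have hamem : a ∈ P := (hPiff a).mpr (Or.inl rfl)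
  have hcmem : c ∈ P := (hPiff c).mpr (Or.inr rfl)
  set e1 : ↥P ≃ Fin 2 :=
    { toFun := fun p => if p.1 = a then 0 else 1
      invFun := ![⟨a, hamem⟩, ⟨c, hcmem⟩]
      left_inv := by
        rintro ⟨x, hx⟩
        rcases (hPiff x).mp hx with rfl | rfl
        · simp
        · simp [hac.symm]
      right_inv := by
        intro i
        fin_cases i
        · simp
        · simp [hac.symm] } with he1
  set l : ℕ := Fintype.card ↥(Pᶜ) with hl
  have hl2 : 2 ≤ l := by
    rw [hl]
    have h1 : (1 : ℕ) < Fintype.card ↥(Pᶜ) := by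
      rw [Fintype.one_lt_card_iff]
      refine ⟨⟨b, ?_⟩, ⟨d, ?_⟩, ?_⟩
      · simp [hP, hba, hbc]
      · simp [hP, hda, hdc]
      · intro h
        exact hbd (congrArg Subtype.val h)
    omega
  set e2 : ↥(Pᶜ) ≃ Fin l := Fintype.equivFin _ with he2
  set eqv : V ≃ (Fin 2 ⊕ Fin l) :=
    (Equiv.Set.sumCompl P).symm.trans (Equiv.sumCongr e1 e2) with heqv
  have heqv1 : ∀ (x : V) (hx : x ∈ P), eqv x = Sum.inl (e1 ⟨x, hx⟩) := by
    intro x hx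
    rw [heqv]
    simp [Equiv.Set.sumCompl_symm_apply_of_mem hx]
  have heqv2 : ∀ (x : V) (hx : x ∉ P), eqv x = Sum.inr (e2 ⟨x, hx⟩) := by
    intro x hx
    rw [heqv]
    simp [Equiv.Set.sumCompl_symm_apply_of_notMem hx]
  refine ⟨l, hl2, ⟨⟨eqv, ?_⟩⟩⟩
  intro x y
  show (completeBipartiteGraph (Fin 2) (Fin l)).Adj (eqv x) (eqv y) ↔ G.Adj x y
  by_cases hx : x ∈ P <;> by_cases hy : y ∈ P
  · rw [heqv1 x hx, heqv1 y hy]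
    apply iff_of_false
    · simp [completeBipartiteGraph]
    · intro hxy
      rw [hchar] at hxy
      have h1 := (hPiff x).mp hx
      have h2 := (hPiff y).mp hy
      tauto
  · rw [heqv1 x hx, heqv2 y hy]
    apply iff_of_true
    · simp [completeBipartiteGraph]
    · rw [hchar]
      exact Or.inl ⟨(hPiff x).mp hx, fun h => hy ((hPiff y).mpr h)⟩
  · rw [heqv2 x hx, heqv1 y hy]
    apply iff_of_true
    · simp [completeBipartiteGraph]
    · rw [hchar]
      exact Or.inr ⟨fun h => hx ((hPiff x).mpr h), (hPiff y).mp hy⟩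
  · rw [heqv2 x hx, heqv2 y hy]
    apply iff_of_false
    · simp [completeBipartiteGraph]
    · intro hxy
      rw [hchar] at hxy
      have h1 : ¬(x = a ∨ x = c) := fun h => hx ((hPiff x).mpr h)
      have h2 : ¬(y = a ∨ y = c) := fun h => hy ((hPiff y).mpr h)
      tauto


end E3

section F
variable {V : Type*} {G : SimpleGraph V} {u v : V}
/-! ### structural lemmas -/

lemma Cfg4.rot {a b c d : V} (h : Cfg4 G a b c d) : Cfg4 G b c d a := by
  obtain ⟨hab, hbc, hcd, hda, hac, hbd, g1, g2⟩ := h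
  exact ⟨hbc, hcd, hda, hab, hbd, fun x => hac x.symm, g2, g1.symm⟩

lemma Cfg2.flip {a b c d : V} (h : Cfg2 G a b c d) : Cfg2 G c d a b := by
  obtain ⟨hab, hcd, nac, nad, nbc, nbd, e1, e2, e3, e4⟩ := h
  exact ⟨hcd, hab, fun x => nac x.symm, fun x => nbc x.symm,
    fun x => nad x.symm, fun x => nbd x.symm, e1.symm, e3.symm, e2.symm, e4.symm⟩

lemma Cfg2.swap1 {a b c d : V} (h : Cfg2 G a b c d) : Cfg2 G b a c d := by
  obtain ⟨hab, hcd, nac, nad, nbc, nbd, e1, e2, e3, e4⟩ := h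
  exact ⟨hab.symm, hcd, nbc, nbd, nac, nad, e3, e4, e1, e2⟩

section withH
variable (H : ∀ u v : V, G.Adj u v → (G.contractEdge u v).IsSplit)

include H

lemma far4 {a b c d : V} (h : Cfg4 G a b c d) {u v : V} (huv : G.Adj u v)
    (ua : u ≠ a) (ub : u ≠ b) (uc : u ≠ c) (ud : u ≠ d)
    (va : v ≠ a) (vb : v ≠ b) (vc : v ≠ c) (vd : v ≠ d) : False := by
  obtain ⟨hab, hbc, hcd, hda, hac, hbd, g1, g2⟩ := h
  refine Cfg4.not_split (a := ⟨a, va.symm⟩) (b := ⟨b, vb.symm⟩) (c := ⟨c, vc.symm⟩)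
    (d := ⟨d, vd.symm⟩) ?_ (H u v huv)
  refine ⟨(contract_lift ua.symm ub.symm).mpr hab,
    (contract_lift ub.symm uc.symm).mpr hbc,
    (contract_lift uc.symm ud.symm).mpr hcd,
    (contract_lift ud.symm ua.symm).mpr hda,
    fun x => hac ((contract_lift ua.symm uc.symm).mp x),
    fun x => hbd ((contract_lift ub.symm ud.symm).mp x),
    fun e => g1 (congrArg Subtype.val e), fun e => g2 (congrArg Subtype.val e)⟩

lemma far2 {a b c d : V} (h : Cfg2 G a b c d) {u v : V} (huv : G.Adj u v)
    (ua : u ≠ a) (ub : u ≠ b) (uc : u ≠ c) (ud : u ≠ d)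
    (va : v ≠ a) (vb : v ≠ b) (vc : v ≠ c) (vd : v ≠ d) : False := by
  obtain ⟨hab, hcd, nac, nad, nbc, nbd, e1, e2, e3, e4⟩ := h
  refine Cfg2.not_split (a := ⟨a, va.symm⟩) (b := ⟨b, vb.symm⟩) (c := ⟨c, vc.symm⟩)
    (d := ⟨d, vd.symm⟩) ?_ (H u v huv)
  refine ⟨(contract_lift ua.symm ub.symm).mpr hab,
    (contract_lift uc.symm ud.symm).mpr hcd,
    fun x => nac ((contract_lift ua.symm uc.symm).mp x),
    fun x => nad ((contract_lift ua.symm ud.symm).mp x),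
    fun x => nbc ((contract_lift ub.symm uc.symm).mp x),
    fun x => nbd ((contract_lift ub.symm ud.symm).mp x),
    fun e => e1 (congrArg Subtype.val e), fun e => e2 (congrArg Subtype.val e),
    fun e => e3 (congrArg Subtype.val e), fun e => e4 (congrArg Subtype.val e)⟩

lemma no_c5 {a b c d e : V} (h : Cfg5 G a b c d e) : False := by
  obtain ⟨hab, hbc, hcd, hde, hea, hac, hbd, hce, hda, heb, n1, n2, n3, n4, n5⟩ := h
  refine Cfg4.not_split (a := ⟨a, hab.ne⟩) (b := ⟨c, hbc.ne'⟩) (c := ⟨d, n2.symm⟩)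
    (d := ⟨e, n5⟩) ?_ (H a b hab)
  refine ⟨(contract_merge hab.ne n1.symm).mpr (Or.inr hbc), ?_, ?_, ?_, ?_, ?_, ?_, ?_⟩
  · exact (contract_lift n1.symm n4).mpr hcd
  · exact (contract_lift n4 hea.ne).mpr hde
  · exact ((contract_merge hab.ne hea.ne).mpr (Or.inl hea.symm)).symm
  · intro x
    rcases (contract_merge hab.ne n4).mp x with h' | h'
    · exact hda h'.symm
    · exact hbd h'
  · exact fun x => hce ((contract_lift n1.symm hea.ne).mp x)
  · exact fun e' => n4 (congrArg Subtype.val e').symm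
  · exact fun e' => n3 (congrArg Subtype.val e')

lemma type_step {a b c d : V} (h : Cfg4 G a b c d) {y : V}
    (ya : y ≠ a) (yb : y ≠ b) (yc : y ≠ c) (yd : y ≠ d)
    (hya : G.Adj y a) (hnyc : ¬G.Adj y c) : False := by
  obtain ⟨hab, hbc, hcd, hda, hac, hbd, g1, g2⟩ := h
  refine Cfg4.not_split (a := ⟨y, ya⟩) (b := ⟨b, hab.ne'⟩) (c := ⟨c, g1.symm⟩)
    (d := ⟨d, hda.ne⟩) ?_ (H y a hya)
  refine ⟨(contract_merge ya yb.symm).mpr (Or.inr hab), ?_, ?_, ?_, ?_, ?_, ?_, ?_⟩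
  · exact (contract_lift yb.symm yc.symm).mpr hbc
  · exact (contract_lift yc.symm yd.symm).mpr hcd
  · exact ((contract_merge ya yd.symm).mpr (Or.inr hda.symm)).symm
  · intro x
    rcases (contract_merge ya yc.symm).mp x with h' | h'
    · exact hnyc h'
    · exact hac h'
  · exact fun x => hbd ((contract_lift yb.symm yd.symm).mp x)
  · exact fun e => yc (congrArg Subtype.val e)
  · exact fun e => g2 (congrArg Subtype.val e)

end withH

lemma exists_nbr (hconn : G.Connected) {x w : V} (hxw : x ≠ w) : ∃ z, G.Adj x z := by
  obtain ⟨p⟩ := hconn.preconnected x w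
  obtain ⟨dart, _, h1, h2⟩ := p.exists_boundary_dart {x} (Set.mem_singleton x)
    (by simp [Set.mem_singleton_iff]; exact hxw.symm)
  rw [Set.mem_singleton_iff] at h1
  exact ⟨dart.toProd.2, h1 ▸ dart.adj⟩

lemma cross_edge (hconn : G.Connected) {A : Set V} {x w : V} (hx : x ∈ A) (hw : w ∉ A) :
    ∃ p q, G.Adj p q ∧ p ∈ A ∧ q ∉ A := by
  obtain ⟨p⟩ := hconn.preconnected x w
  obtain ⟨dart, _, h1, h2⟩ := p.exists_boundary_dart A hx hw
  exact ⟨dart.toProd.1, dart.toProd.2, dart.adj, h1, h2⟩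

section masters
variable [Fintype V] [DecidableEq V]
variable (H : ∀ u v : V, G.Adj u v → (G.contractEdge u v).IsSplit)

include H

theorem c4_master (hconn : G.Connected) {a b c d : V} (h : Cfg4 G a b c d) :
    IsExceptional G := by
  obtain ⟨hab, hbc, hcd, hda, hac, hbd, gac, gbd⟩ := h
  have hcfg : Cfg4 G a b c d := ⟨hab, hbc, hcd, hda, hac, hbd, gac, gbd⟩
  have hOutAdj : ∀ y, y ≠ a → y ≠ b → y ≠ c → y ≠ d →
      ∀ x, G.Adj y x → (x = a ∨ x = b ∨ x = c ∨ x = d) := by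
    intro y h1 h2 h3 h4 x hyx
    by_contra hc
    push_neg at hc
    exact far4 H hcfg hyx h1 h2 h3 h4 hc.1 hc.2.1 hc.2.2.1 hc.2.2.2
  have hOutNon : ∀ y z, (y ≠ a ∧ y ≠ b ∧ y ≠ c ∧ y ≠ d) → (z ≠ a ∧ z ≠ b ∧ z ≠ c ∧ z ≠ d) →
      ¬ G.Adj y z := by
    rintro y z ⟨y1,y2,y3,y4⟩ ⟨z1,z2,z3,z4⟩ hadj
    rcases hOutAdj y y1 y2 y3 y4 z hadj with rfl|rfl|rfl|rfl
    · exact z1 rfl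
    · exact z2 rfl
    · exact z3 rfl
    · exact z4 rfl
  have tAC : ∀ y, (y ≠ a ∧ y ≠ b ∧ y ≠ c ∧ y ≠ d) → (G.Adj y a ↔ G.Adj y c) := by
    rintro y ⟨y1,y2,y3,y4⟩
    constructor
    · intro hy; by_contra hn; exact type_step H hcfg y1 y2 y3 y4 hy hn
    · intro hy; by_contra hn
      exact type_step H (hcfg.rot.rot) y3 y4 y1 y2 hy hn
  have tBD : ∀ y, (y ≠ a ∧ y ≠ b ∧ y ≠ c ∧ y ≠ d) → (G.Adj y b ↔ G.Adj y d) := by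
    rintro y ⟨y1,y2,y3,y4⟩
    constructor
    · intro hy; by_contra hn; exact type_step H hcfg.rot y2 y3 y4 y1 hy hn
    · intro hy; by_contra hn; exact type_step H hcfg.rot.rot.rot y4 y1 y2 y3 hy hn
  have hOutab : ∀ y, (y ≠ a ∧ y ≠ b ∧ y ≠ c ∧ y ≠ d) → (G.Adj y a ∨ G.Adj y b) := by
    rintro y hy
    obtain ⟨z, hz⟩ := exists_nbr hconn hy.1
    rcases hOutAdj y hy.1 hy.2.1 hy.2.2.1 hy.2.2.2 z hz with rfl|rfl|rfl|rfl
    · exact Or.inl hz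
    · exact Or.inr hz
    · exact Or.inl ((tAC y hy).mpr hz)
    · exact Or.inr ((tBD y hy).mpr hz)
  -- A/B exclusion
  have hABex : ∀ y1 y2, (y1 ≠ a ∧ y1 ≠ b ∧ y1 ≠ c ∧ y1 ≠ d) →
      (y2 ≠ a ∧ y2 ≠ b ∧ y2 ≠ c ∧ y2 ≠ d) →
      G.Adj y1 a → ¬G.Adj y1 b → G.Adj y2 b → ¬G.Adj y2 a → False := by
    rintro y1 y2 o1 o2 h1a h1b h2b h2a
    have hy12 : y1 ≠ y2 := fun e => h2a (e ▸ h1a)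
    have hnn : ¬G.Adj y1 y2 := hOutNon _ _ o1 o2
    have h2d : G.Adj y2 d := (tBD y2 o2).mp h2b
    refine Cfg4.not_split (a := ⟨y1, o1.1⟩) (b := ⟨b, hab.ne'⟩) (c := ⟨y2, o2.1⟩)
      (d := ⟨d, hda.ne⟩) ?_ (H y1 a h1a)
    refine ⟨(contract_merge o1.1 o1.2.1.symm).mpr (Or.inr hab), ?_, ?_, ?_, ?_, ?_, ?_, ?_⟩
    · exact (contract_lift o1.2.1.symm hy12.symm).mpr h2b.symm
    · exact (contract_lift hy12.symm o1.2.2.2.symm).mpr h2d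
    · exact ((contract_merge o1.1 o1.2.2.2.symm).mpr (Or.inr hda.symm)).symm
    · intro x
      rcases (contract_merge o1.1 hy12.symm).mp x with h' | h'
      · exact hnn h'
      · exact h2a h'.symm
    · exact fun x => hbd ((contract_lift o1.2.1.symm o1.2.2.2.symm).mp x)
    · exact fun e => hy12 (congrArg Subtype.val e)
    · exact fun e => gbd (congrArg Subtype.val e)
  -- Z vs A exclusion
  have hZAex : ∀ z y, (z ≠ a ∧ z ≠ b ∧ z ≠ c ∧ z ≠ d) → (y ≠ a ∧ y ≠ b ∧ y ≠ c ∧ y ≠ d) →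
      G.Adj z a → G.Adj z b → G.Adj y a → ¬G.Adj y b → False := by
    rintro z y oz oy hza hzb hya hyb
    have hzc : G.Adj z c := (tAC z oz).mp hza
    have hyc : G.Adj y c := (tAC y oy).mp hya
    have hzy : z ≠ y := fun e => hyb (e ▸ hzb)
    have cfg' : Cfg4 G z a y c :=
      ⟨hza, hya.symm, hyc, hzc.symm, hOutNon z y oz oy, hac, hzy, gac⟩
    exact type_step H cfg' oz.2.1.symm hab.ne' oy.2.1.symm hbc.ne hzb.symm
      (fun x => hyb x.symm)
  have hZBex : ∀ z y, (z ≠ a ∧ z ≠ b ∧ z ≠ c ∧ z ≠ d) → (y ≠ a ∧ y ≠ b ∧ y ≠ c ∧ y ≠ d) →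
      G.Adj z a → G.Adj z b → G.Adj y b → ¬G.Adj y a → False := by
    rintro z y oz oy hza hzb hyb hya
    have hzd : G.Adj z d := (tBD z oz).mp hzb
    have hyd : G.Adj y d := (tBD y oy).mp hyb
    have hzy : z ≠ y := fun e => hya (e ▸ hza)
    have cfg' : Cfg4 G z b y d :=
      ⟨hzb, hyb.symm, hyd, hzd.symm, hOutNon z y oz oy, hbd, hzy, gbd⟩
    exact type_step H cfg' oz.1.symm hab.ne oy.1.symm hda.ne' hza.symm
      (fun x => hya x.symm)
  by_cases hzex : ∃ z, (z ≠ a ∧ z ≠ b ∧ z ≠ c ∧ z ≠ d) ∧ G.Adj z a ∧ G.Adj z b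
  · obtain ⟨z, oz, hza, hzb⟩ := hzex
    have hzc : G.Adj z c := (tAC z oz).mp hza
    have hzd : G.Adj z d := (tBD z oz).mp hzb
    have hOutZ : ∀ y, (y ≠ a ∧ y ≠ b ∧ y ≠ c ∧ y ≠ d) → G.Adj y a ∧ G.Adj y b := by
      rintro y oy
      rcases hOutab y oy with h' | h'
      · refine ⟨h', ?_⟩
        by_contra hyb
        exact hZAex z y oz oy hza hzb h' hyb
      · refine ⟨?_, h'⟩
        by_contra hya
        exact hZBex z y oz oy hza hzb h' hya
    by_cases hz2 : ∃ z2, (z2 ≠ a ∧ z2 ≠ b ∧ z2 ≠ c ∧ z2 ≠ d) ∧ z2 ≠ z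
    · obtain ⟨z2, oz2, hnez⟩ := hz2
      obtain ⟨h2a, h2b⟩ := hOutZ z2 oz2
      have h2c : G.Adj z2 c := (tAC z2 oz2).mp h2a
      have h2d : G.Adj z2 d := (tBD z2 oz2).mp h2b
      have cfgX : Cfg4 G b z d z2 :=
        ⟨hzb.symm, hzd, h2d.symm, h2b, hbd, hOutNon z z2 oz oz2, gbd, hnez.symm⟩
      have cov : ∀ w : V, w = a ∨ w = b ∨ w = c ∨ w = d ∨ w = z ∨ w = z2 := by
        intro w
        by_contra hcw
        push_neg at hcw
        obtain ⟨w1, w2, w3, w4, w5, w6⟩ := hcw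
        have ow : (w ≠ a ∧ w ≠ b ∧ w ≠ c ∧ w ≠ d) := ⟨w1, w2, w3, w4⟩
        obtain ⟨hwa, hwb⟩ := hOutZ w ow
        exact far4 H cfgX hwa w2 w5 w4 w6 hab.ne oz.1.symm hda.ne' oz2.1.symm
      exact Or.inr (Or.inr (Or.inl (iso_E2 a b c d z z2 cov hab hbc hcd hda
        hza hzb hzc hzd h2a h2b h2c h2d hac hbd (hOutNon z z2 oz oz2)
        gac gbd hnez.symm)))
    · push_neg at hz2
      have cov : ∀ w : V, w = a ∨ w = b ∨ w = c ∨ w = d ∨ w = z := by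
        intro w
        by_contra hcw
        push_neg at hcw
        obtain ⟨w1, w2, w3, w4, w5⟩ := hcw
        exact w5 (hz2 w ⟨w1, w2, w3, w4⟩)
      exact Or.inr (Or.inl (iso_W4 a b c d z cov hab hbc hcd hda hza hzb hzc hzd
        hac hbd gac gbd))
  · push_neg at hzex
    -- no all-four vertex
    by_cases hBy : ∃ y, (y ≠ a ∧ y ≠ b ∧ y ≠ c ∧ y ≠ d) ∧ G.Adj y b
    · -- poles {b, d}
      obtain ⟨y0, oy0, hy0b⟩ := hBy
      have hy0a : ¬G.Adj y0 a := fun h' => hzex y0 oy0 h' hy0b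
      have hallB : ∀ y, (y ≠ a ∧ y ≠ b ∧ y ≠ c ∧ y ≠ d) → G.Adj y b ∧ ¬G.Adj y a := by
        rintro y oy
        rcases hOutab y oy with h' | h'
        · exact absurd (hABex y y0 oy oy0 h' (fun hb' => hzex y oy h' hb') hy0b hy0a) id
        · exact ⟨h', fun ha' => hzex y oy ha' h'⟩
      have hchar : ∀ x y : V, G.Adj x y ↔
          (((x = b ∨ x = d) ∧ ¬(y = b ∨ y = d)) ∨ (¬(x = b ∨ x = d) ∧ (y = b ∨ y = d))) := by
        have claimR : ∀ y, ¬(y = b ∨ y = d) → G.Adj b y ∧ G.Adj d y := by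
          intro y hy
          push_neg at hy
          by_cases hy1 : y = a
          · rw [hy1]; exact ⟨hab.symm, hda⟩
          · by_cases hy2 : y = c
            · rw [hy2]; exact ⟨hbc, hcd.symm⟩
            · have oy : (y ≠ a ∧ y ≠ b ∧ y ≠ c ∧ y ≠ d) := ⟨hy1, hy.1, hy2, hy.2⟩
              obtain ⟨h1, _⟩ := hallB y oy
              exact ⟨h1.symm, ((tBD y oy).mp h1).symm⟩
        have claimQ : ∀ x y, ¬(x = b ∨ x = d) → ¬(y = b ∨ y = d) → ¬G.Adj x y := by
          intro x y hx hy hxy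
          push_neg at hx hy
          by_cases hx1 : x = a
          · rw [hx1] at hxy
            by_cases hy1 : y = a
            · rw [hy1] at hxy; exact G.irrefl hxy
            · by_cases hy2 : y = c
              · rw [hy2] at hxy; exact hac hxy
              · exact (hallB y ⟨hy1, hy.1, hy2, hy.2⟩).2 hxy.symm
          · by_cases hx2 : x = c
            · rw [hx2] at hxy
              by_cases hy1 : y = a
              · rw [hy1] at hxy; exact hac hxy.symm
              · by_cases hy2 : y = c
                · rw [hy2] at hxy; exact G.irrefl hxy
                · have oy : (y ≠ a ∧ y ≠ b ∧ y ≠ c ∧ y ≠ d) := ⟨hy1, hy.1, hy2, hy.2⟩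
                  exact (hallB y oy).2 ((tAC y oy).mpr hxy.symm)
            · have ox : (x ≠ a ∧ x ≠ b ∧ x ≠ c ∧ x ≠ d) := ⟨hx1, hx.1, hx2, hx.2⟩
              by_cases hy1 : y = a
              · rw [hy1] at hxy; exact (hallB x ox).2 hxy
              · by_cases hy2 : y = c
                · rw [hy2] at hxy; exact (hallB x ox).2 ((tAC x ox).mpr hxy)
                · exact hOutNon x y ox ⟨hy1, hy.1, hy2, hy.2⟩ hxy
        intro x y
        constructor
        · intro hxy
          by_cases hx : x = b ∨ x = d <;> by_cases hy : y = b ∨ y = d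
          · exfalso
            rcases hx with rfl | rfl <;> rcases hy with rfl | rfl
            · exact G.irrefl hxy
            · exact hbd hxy
            · exact hbd hxy.symm
            · exact G.irrefl hxy
          · exact Or.inl ⟨hx, hy⟩
          · exact Or.inr ⟨hx, hy⟩
          · exact absurd hxy (claimQ x y hx hy)
        · rintro (⟨hx, hy⟩ | ⟨hx, hy⟩)
          · rcases hx with rfl | rfl
            · exact (claimR y hy).1
            · exact (claimR y hy).2
          · rcases hy with rfl | rfl
            · exact (claimR x hx).1.symm
            · exact (claimR x hx).2.symm
      exact Or.inl (iso_K2l b d a c gbd gac hab.ne hda.ne' hbc.ne' hcd.ne hchar)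
    · -- poles {a, c}
      push_neg at hBy
      have hallA : ∀ y, (y ≠ a ∧ y ≠ b ∧ y ≠ c ∧ y ≠ d) → G.Adj y a ∧ ¬G.Adj y b := by
        rintro y oy
        refine ⟨?_, hBy y oy⟩
        rcases hOutab y oy with h' | h'
        · exact h'
        · exact absurd h' (hBy y oy)
      have hchar : ∀ x y : V, G.Adj x y ↔
          (((x = a ∨ x = c) ∧ ¬(y = a ∨ y = c)) ∨ (¬(x = a ∨ x = c) ∧ (y = a ∨ y = c))) := by
        have claimR : ∀ y, ¬(y = a ∨ y = c) → G.Adj a y ∧ G.Adj c y := by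
          intro y hy
          push_neg at hy
          by_cases hy1 : y = b
          · rw [hy1]; exact ⟨hab, hbc.symm⟩
          · by_cases hy2 : y = d
            · rw [hy2]; exact ⟨hda.symm, hcd⟩
            · have oy : (y ≠ a ∧ y ≠ b ∧ y ≠ c ∧ y ≠ d) := ⟨hy.1, hy1, hy.2, hy2⟩
              obtain ⟨h1, _⟩ := hallA y oy
              exact ⟨h1.symm, ((tAC y oy).mp h1).symm⟩
        have claimQ : ∀ x y, ¬(x = a ∨ x = c) → ¬(y = a ∨ y = c) → ¬G.Adj x y := by
          intro x y hx hy hxy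
          push_neg at hx hy
          by_cases hx1 : x = b
          · rw [hx1] at hxy
            by_cases hy1 : y = b
            · rw [hy1] at hxy; exact G.irrefl hxy
            · by_cases hy2 : y = d
              · rw [hy2] at hxy; exact hbd hxy
              · exact (hallA y ⟨hy.1, hy1, hy.2, hy2⟩).2 hxy.symm
          · by_cases hx2 : x = d
            · rw [hx2] at hxy
              by_cases hy1 : y = b
              · rw [hy1] at hxy; exact hbd hxy.symm
              · by_cases hy2 : y = d
                · rw [hy2] at hxy; exact G.irrefl hxy
                · have oy : (y ≠ a ∧ y ≠ b ∧ y ≠ c ∧ y ≠ d) := ⟨hy.1, hy1, hy.2, hy2⟩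
                  exact (hallA y oy).2 ((tBD y oy).mpr hxy.symm)
            · have ox : (x ≠ a ∧ x ≠ b ∧ x ≠ c ∧ x ≠ d) := ⟨hx.1, hx1, hx.2, hx2⟩
              by_cases hy1 : y = b
              · rw [hy1] at hxy; exact (hallA x ox).2 hxy
              · by_cases hy2 : y = d
                · rw [hy2] at hxy; exact (hallA x ox).2 ((tBD x ox).mpr hxy)
                · exact hOutNon x y ox ⟨hy.1, hy1, hy.2, hy2⟩ hxy
        intro x y
        constructor
        · intro hxy
          by_cases hx : x = a ∨ x = c <;> by_cases hy : y = a ∨ y = c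
          · exfalso
            rcases hx with rfl | rfl <;> rcases hy with rfl | rfl
            · exact G.irrefl hxy
            · exact hac hxy
            · exact hac hxy.symm
            · exact G.irrefl hxy
          · exact Or.inl ⟨hx, hy⟩
          · exact Or.inr ⟨hx, hy⟩
          · exact absurd hxy (claimQ x y hx hy)
        · rintro (⟨hx, hy⟩ | ⟨hx, hy⟩)
          · rcases hx with rfl | rfl
            · exact (claimR y hy).1
            · exact (claimR y hy).2
          · rcases hy with rfl | rfl
            · exact (claimR x hx).1.symm
            · exact (claimR x hx).2.symm
      exact Or.inl (iso_K2l a c b d gac gbd hab.ne' hbc.ne hda.ne hcd.ne' hchar)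

set_option maxHeartbeats 3000000 in
theorem twok2_master (hconn : G.Connected)
    (noC4 : ∀ p q r s : V, ¬ Cfg4 G p q r s)
    {a b c d : V} (h : Cfg2 G a b c d) : IsExceptional G := by
  obtain ⟨hab, hcd, nac, nad, nbc, nbd, eac, ead, ebc, ebd⟩ := h
  have hcfg : Cfg2 G a b c d := ⟨hab, hcd, nac, nad, nbc, nbd, eac, ead, ebc, ebd⟩
  have hOutAdj : ∀ y, y ≠ a → y ≠ b → y ≠ c → y ≠ d →
      ∀ x, G.Adj y x → (x = a ∨ x = b ∨ x = c ∨ x = d) := by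
    intro y h1 h2 h3 h4 x hyx
    by_contra hc
    push_neg at hc
    exact far2 H hcfg hyx h1 h2 h3 h4 hc.1 hc.2.1 hc.2.2.1 hc.2.2.2
  have hOutNon : ∀ y z, (y ≠ a ∧ y ≠ b ∧ y ≠ c ∧ y ≠ d) → (z ≠ a ∧ z ≠ b ∧ z ≠ c ∧ z ≠ d) →
      ¬ G.Adj y z := by
    rintro y z ⟨y1,y2,y3,y4⟩ ⟨z1,z2,z3,z4⟩ hadj
    rcases hOutAdj y y1 y2 y3 y4 z hadj with rfl|rfl|rfl|rfl
    · exact z1 rfl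
    · exact z2 rfl
    · exact z3 rfl
    · exact z4 rfl
  have hM4 : ∀ y, (y ≠ a ∧ y ≠ b ∧ y ≠ c ∧ y ≠ d) → (G.Adj y a ∨ G.Adj y b) →
      ¬G.Adj y c → ¬G.Adj y d → False := by
    rintro y ⟨y1,y2,y3,y4⟩ hy hcn hdn
    refine Cfg2.not_split (a := ⟨a, hab.ne⟩) (b := ⟨y, y2⟩) (c := ⟨c, ebc.symm⟩)
      (d := ⟨d, ebd.symm⟩) ?_ (H a b hab)
    refine ⟨(contract_merge hab.ne y1).mpr ?_, ?_, ?_, ?_, ?_, ?_, ?_, ?_, ?_, ?_⟩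
    · rcases hy with h' | h'
      · exact Or.inl h'.symm
      · exact Or.inr h'.symm
    · exact (contract_lift eac.symm ead.symm).mpr hcd
    · intro x
      rcases (contract_merge hab.ne eac.symm).mp x with h' | h'
      · exact nac h'
      · exact nbc h'
    · intro x
      rcases (contract_merge hab.ne ead.symm).mp x with h' | h'
      · exact nad h'
      · exact nbd h'
    · exact fun x => hcn ((contract_lift y1 eac.symm).mp x)
    · exact fun x => hdn ((contract_lift y1 ead.symm).mp x)
    · exact fun e => eac (congrArg Subtype.val e)
    · exact fun e => ead (congrArg Subtype.val e)
    · exact fun e => y3 (congrArg Subtype.val e)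
    · exact fun e => y4 (congrArg Subtype.val e)
  have hM4' : ∀ y, (y ≠ a ∧ y ≠ b ∧ y ≠ c ∧ y ≠ d) → (G.Adj y c ∨ G.Adj y d) →
      ¬G.Adj y a → ¬G.Adj y b → False := by
    rintro y ⟨y1,y2,y3,y4⟩ hy han hbn
    refine Cfg2.not_split (a := ⟨c, hcd.ne⟩) (b := ⟨y, y4⟩) (c := ⟨a, ead⟩)
      (d := ⟨b, ebd⟩) ?_ (H c d hcd)
    refine ⟨(contract_merge hcd.ne y3).mpr ?_, ?_, ?_, ?_, ?_, ?_, ?_, ?_, ?_, ?_⟩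
    · rcases hy with h' | h'
      · exact Or.inl h'.symm
      · exact Or.inr h'.symm
    · exact (contract_lift eac ebc).mpr hab
    · intro x
      rcases (contract_merge hcd.ne eac).mp x with h' | h'
      · exact nac h'.symm
      · exact nad h'.symm
    · intro x
      rcases (contract_merge hcd.ne ebc).mp x with h' | h'
      · exact nbc h'.symm
      · exact nbd h'.symm
    · exact fun x => han ((contract_lift y3 eac).mp x)
    · exact fun x => hbn ((contract_lift y3 ebc).mp x)
    · exact fun e => eac (congrArg Subtype.val e).symm
    · exact fun e => ebc (congrArg Subtype.val e).symm
    · exact fun e => y1 (congrArg Subtype.val e)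
    · exact fun e => y2 (congrArg Subtype.val e)
  have hOutboth : ∀ y, (y ≠ a ∧ y ≠ b ∧ y ≠ c ∧ y ≠ d) →
      (G.Adj y a ∨ G.Adj y b) ∧ (G.Adj y c ∨ G.Adj y d) := by
    rintro y oy
    obtain ⟨z, hz⟩ := exists_nbr hconn oy.1
    have hstart : (G.Adj y a ∨ G.Adj y b) ∨ (G.Adj y c ∨ G.Adj y d) := by
      rcases hOutAdj y oy.1 oy.2.1 oy.2.2.1 oy.2.2.2 z hz with rfl|rfl|rfl|rfl
      · exact Or.inl (Or.inl hz)
      · exact Or.inl (Or.inr hz)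
      · exact Or.inr (Or.inl hz)
      · exact Or.inr (Or.inr hz)
    rcases hstart with h' | h'
    · refine ⟨h', ?_⟩
      by_contra hcc
      push_neg at hcc
      exact hM4 y oy h' hcc.1 hcc.2
    · refine ⟨?_, h'⟩
      by_contra hcc
      push_neg at hcc
      exact hM4' y oy h' hcc.1 hcc.2
  have huniq : ∀ y1 y2, (y1 ≠ a ∧ y1 ≠ b ∧ y1 ≠ c ∧ y1 ≠ d) →
      (y2 ≠ a ∧ y2 ≠ b ∧ y2 ≠ c ∧ y2 ≠ d) → y1 = y2 := by
    intro y1 y2 o1 o2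
    by_contra hne
    have hnn : ¬G.Adj y1 y2 := hOutNon _ _ o1 o2
    obtain ⟨hb1, hc1⟩ := hOutboth y1 o1
    obtain ⟨hb2, hc2⟩ := hOutboth y2 o2
    by_cases hcab : (G.Adj y1 a ∧ G.Adj y2 a) ∨ (G.Adj y1 b ∧ G.Adj y2 b)
    · by_cases hccd : (G.Adj y1 c ∧ G.Adj y2 c) ∨ (G.Adj y1 d ∧ G.Adj y2 d)
      · rcases hcab with ⟨h1p, h2p⟩ | ⟨h1p, h2p⟩ <;>
          rcases hccd with ⟨h1q, h2q⟩ | ⟨h1q, h2q⟩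
        · exact noC4 y1 a y2 c ⟨h1p, h2p.symm, h2q, h1q.symm, hnn, nac, hne, eac⟩
        · exact noC4 y1 a y2 d ⟨h1p, h2p.symm, h2q, h1q.symm, hnn, nad, hne, ead⟩
        · exact noC4 y1 b y2 c ⟨h1p, h2p.symm, h2q, h1q.symm, hnn, nbc, hne, ebc⟩
        · exact noC4 y1 b y2 d ⟨h1p, h2p.symm, h2q, h1q.symm, hnn, nbd, hne, ebd⟩
      · push_neg at hccd
        have inner2 : ∀ p, G.Adj y1 p → G.Adj y2 p → ¬G.Adj p c → ¬G.Adj p d →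
            p ≠ c → p ≠ d → False := by
          intro p h1p h2p npc npd epc epd
          by_cases hy1c : G.Adj y1 c
          · have hy2c : ¬G.Adj y2 c := hccd.1 hy1c
            have hy2d : G.Adj y2 d := hc2.resolve_left hy2c
            have hy1d : ¬G.Adj y1 d := fun x => hccd.2 x hy2d
            exact no_c5 H (a := y1) (b := p) (c := y2) (d := d) (e := c)
              ⟨h1p, h2p.symm, hy2d, hcd.symm, hy1c.symm, hnn, npd, hy2c,
                fun x => hy1d x.symm, fun x => npc x.symm,
                hne, epd, o2.2.2.1, fun e => o1.2.2.2 e.symm, epc.symm⟩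
          · have hy1d : G.Adj y1 d := hc1.resolve_left hy1c
            have hy2d : ¬G.Adj y2 d := hccd.2 hy1d
            have hy2c : G.Adj y2 c := hc2.resolve_right hy2d
            exact no_c5 H (a := y1) (b := p) (c := y2) (d := c) (e := d)
              ⟨h1p, h2p.symm, hy2c, hcd, hy1d.symm, hnn, npc, hy2d,
                fun x => hy1c x.symm, fun x => npd x.symm,
                hne, epc, o2.2.2.2, fun e => o1.2.2.1 e.symm, epd.symm⟩
        rcases hcab with ⟨h1p, h2p⟩ | ⟨h1p, h2p⟩
        · exact inner2 a h1p h2p nac nad eac ead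
        · exact inner2 b h1p h2p nbc nbd ebc ebd
    · push_neg at hcab
      by_cases hccd : (G.Adj y1 c ∧ G.Adj y2 c) ∨ (G.Adj y1 d ∧ G.Adj y2 d)
      · have inner3 : ∀ q, G.Adj y1 q → G.Adj y2 q → ¬G.Adj a q → ¬G.Adj b q →
            q ≠ a → q ≠ b → False := by
          intro q h1q h2q nqa nqb eqa eqb
          by_cases hy1a : G.Adj y1 a
          · have hy2a : ¬G.Adj y2 a := hcab.1 hy1a
            have hy2b : G.Adj y2 b := hb2.resolve_left hy2a
            have hy1b : ¬G.Adj y1 b := fun x => hcab.2 x hy2b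
            exact no_c5 H (a := y1) (b := q) (c := y2) (d := b) (e := a)
              ⟨h1q, h2q.symm, hy2b, hab.symm, hy1a.symm, hnn, fun x => nqb x.symm, hy2a,
                fun x => hy1b x.symm, nqa,
                hne, eqb, o2.1, fun e => o1.2.1 e.symm, eqa.symm⟩
          · have hy1b : G.Adj y1 b := hb1.resolve_left hy1a
            have hy2b : ¬G.Adj y2 b := hcab.2 hy1b
            have hy2a : G.Adj y2 a := hb2.resolve_right hy2b
            exact no_c5 H (a := y1) (b := q) (c := y2) (d := a) (e := b)
              ⟨h1q, h2q.symm, hy2a, hab, hy1b.symm, hnn, fun x => nqa x.symm, hy2b,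
                fun x => hy1a x.symm, nqb,
                hne, eqa, o2.2.1, fun e => o1.1 e.symm, eqb.symm⟩
        rcases hccd with ⟨h1q, h2q⟩ | ⟨h1q, h2q⟩
        · exact inner3 c h1q h2q nac nbc eac.symm ebc.symm
        · exact inner3 d h1q h2q nad nbd ead.symm ebd.symm
      · push_neg at hccd
        have X1 : G.Adj a y1 ∨ G.Adj b y1 := by
          rcases hb1 with h' | h'
          · exact Or.inl h'.symm
          · exact Or.inr h'.symm
        have X2 : G.Adj a y2 ∨ G.Adj b y2 := by
          rcases hb2 with h' | h'
          · exact Or.inl h'.symm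
          · exact Or.inr h'.symm
        have inner4 : ∀ g1 g2 : V, G.Adj y1 g1 → G.Adj y2 g2 → ¬G.Adj y1 g2 →
            ¬G.Adj y2 g1 → G.Adj g2 g1 → ¬G.Adj a g2 → ¬G.Adj b g2 → ¬G.Adj a g1 →
            ¬G.Adj b g1 → g1 ≠ a → g2 ≠ a → g1 ≠ b → g2 ≠ b → y2 ≠ g1 → y1 ≠ g2 →
            False := by
          intro g1 g2 h11 h22 h12 h21 hgg nag2 nbg2 nag1 nbg1 g1a g2a g1b g2b ey2g1 ey1g2
          refine Cfg5.not_split (a := ⟨y1, o1.2.1⟩) (b := ⟨a, hab.ne⟩) (c := ⟨y2, o2.2.1⟩)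
            (d := ⟨g2, g2b⟩) (e := ⟨g1, g1b⟩) ?_ (H a b hab)
          refine ⟨((contract_merge hab.ne o1.1).mpr X1).symm,
            (contract_merge hab.ne o2.1).mpr X2,
            (contract_lift o2.1 g2a).mpr h22,
            (contract_lift g2a g1a).mpr hgg,
            (contract_lift g1a o1.1).mpr h11.symm,
            ?_, ?_, ?_, ?_, ?_, ?_, ?_, ?_, ?_, ?_⟩
          · exact fun x => hnn ((contract_lift o1.1 o2.1).mp x)
          · intro x
            rcases (contract_merge hab.ne g2a).mp x with h' | h'
            · exact nag2 h'
            · exact nbg2 h'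
          · exact fun x => h21 ((contract_lift o2.1 g1a).mp x)
          · exact fun x => h12 ((contract_lift g2a o1.1).mp x).symm
          · intro x
            rcases (contract_merge hab.ne g1a).mp x.symm with h' | h'
            · exact nag1 h'
            · exact nbg1 h'
          · exact fun e => hne (congrArg Subtype.val e)
          · exact fun e => g2a (congrArg Subtype.val e).symm
          · exact fun e => ey2g1 (congrArg Subtype.val e)
          · exact fun e => ey1g2 (congrArg Subtype.val e).symm
          · exact fun e => g1a (congrArg Subtype.val e)
        by_cases hy1c : G.Adj y1 c
        · have hy2c : ¬G.Adj y2 c := hccd.1 hy1c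
          have hy2d : G.Adj y2 d := hc2.resolve_left hy2c
          have hy1d : ¬G.Adj y1 d := fun x => hccd.2 x hy2d
          exact inner4 c d hy1c hy2d hy1d hy2c hcd.symm nad nbd nac nbc
            eac.symm ead.symm ebc.symm ebd.symm o2.2.2.1 o1.2.2.2
        · have hy1d : G.Adj y1 d := hc1.resolve_left hy1c
          have hy2d : ¬G.Adj y2 d := hccd.2 hy1d
          have hy2c : G.Adj y2 c := hc2.resolve_right hy2d
          exact inner4 d c hy1d hy2c hy1c hy2d hcd nac nbc nad nbd
            ead.symm eac.symm ebd.symm ebc.symm o2.2.2.2 o1.2.2.1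
  have hOutEx : ∃ y, y ≠ a ∧ y ≠ b ∧ y ≠ c ∧ y ≠ d := by
    by_contra hno
    push_neg at hno
    obtain ⟨p, q, hpq, hp, hq⟩ := cross_edge hconn (A := {x : V | x = a ∨ x = b})
      (Or.inl rfl) (show c ∉ {x : V | x = a ∨ x = b} from
        fun hc' => hc'.elim (fun e => eac e.symm) (fun e => ebc e.symm))
    have hq1 : q ≠ a := fun e => hq (Or.inl e)
    have hq2 : q ≠ b := fun e => hq (Or.inr e)
    by_cases hqc : q = c
    · rw [hqc] at hpq
      rcases hp with rfl | rfl
      · exact nac hpq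
      · exact nbc hpq
    · have hqd : q = d := hno q hq1 hq2 hqc
      rw [hqd] at hpq
      rcases hp with rfl | rfl
      · exact nad hpq
      · exact nbd hpq
  obtain ⟨y0, oy0⟩ := hOutEx
  have cov : ∀ w : V, w = a ∨ w = b ∨ w = c ∨ w = d ∨ w = y0 := by
    intro w
    by_contra hcw
    push_neg at hcw
    exact hcw.2.2.2.2 (huniq w y0 ⟨hcw.1, hcw.2.1, hcw.2.2.1, hcw.2.2.2.1⟩ oy0)
  obtain ⟨hb0, hc0⟩ := hOutboth y0 oy0
  by_cases ha' : G.Adj y0 a <;> by_cases hb' : G.Adj y0 b <;>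
    by_cases hc' : G.Adj y0 c <;> by_cases hd' : G.Adj y0 d
  -- TTTT : butterfly
  · refine Or.inr (Or.inr (Or.inr (Or.inr (Or.inr (Or.inr ?_)))))
    exact iso_butterfly a b y0 c d
      (fun w => by rcases cov w with rfl|rfl|rfl|rfl|rfl <;> tauto)
      hab ha'.symm hb'.symm hc' hd' hcd nac nad nbc nbd eac ead ebc ebd
  -- TTTF : hammer a b y0 c d
  · refine Or.inr (Or.inr (Or.inr (Or.inr (Or.inr (Or.inl ?_)))))
    exact iso_hammer a b y0 c d
      (fun w => by rcases cov w with rfl|rfl|rfl|rfl|rfl <;> tauto)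
      hab ha'.symm hb'.symm hc' hcd nac nad nbc nbd hd' eac ead ebc ebd oy0.2.2.2
  -- TTFT : hammer a b y0 d c
  · refine Or.inr (Or.inr (Or.inr (Or.inr (Or.inr (Or.inl ?_)))))
    exact iso_hammer a b y0 d c
      (fun w => by rcases cov w with rfl|rfl|rfl|rfl|rfl <;> tauto)
      hab ha'.symm hb'.symm hd' hcd.symm nad nac nbd nbc hc' ead eac ebd ebc oy0.2.2.1
  -- TTFF : impossible
  · rcases hc0 with h' | h'
    · exact absurd h' hc'
    · exact absurd h' hd'
  -- TFTT : hammer c d y0 a b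
  · refine Or.inr (Or.inr (Or.inr (Or.inr (Or.inr (Or.inl ?_)))))
    exact iso_hammer c d y0 a b
      (fun w => by rcases cov w with rfl|rfl|rfl|rfl|rfl <;> tauto)
      hcd hc'.symm hd'.symm ha' hab (fun x => nac x.symm) (fun x => nbc x.symm)
      (fun x => nad x.symm) (fun x => nbd x.symm) hb'
      eac.symm ebc.symm ead.symm ebd.symm oy0.2.1
  -- TFTF : P5 b a y0 c d
  · refine Or.inr (Or.inr (Or.inr (Or.inr (Or.inl ?_))))
    exact iso_P5 b a y0 c d
      (fun w => by rcases cov w with rfl|rfl|rfl|rfl|rfl <;> tauto)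
      hab.symm ha'.symm hc' hcd (fun x => hb' x.symm) nbc nbd nac nad hd'
      oy0.2.1.symm ebc ebd eac ead oy0.2.2.2
  -- TFFT : P5 b a y0 d c
  · refine Or.inr (Or.inr (Or.inr (Or.inr (Or.inl ?_))))
    exact iso_P5 b a y0 d c
      (fun w => by rcases cov w with rfl|rfl|rfl|rfl|rfl <;> tauto)
      hab.symm ha'.symm hd' hcd.symm (fun x => hb' x.symm) nbd nbc nad nac hc'
      oy0.2.1.symm ebd ebc ead eac oy0.2.2.1
  -- TFFF : impossible
  · rcases hc0 with h' | h'
    · exact absurd h' hc'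
    · exact absurd h' hd'
  -- FTTT : hammer c d y0 b a
  · refine Or.inr (Or.inr (Or.inr (Or.inr (Or.inr (Or.inl ?_)))))
    exact iso_hammer c d y0 b a
      (fun w => by rcases cov w with rfl|rfl|rfl|rfl|rfl <;> tauto)
      hcd hc'.symm hd'.symm hb' hab.symm (fun x => nbc x.symm) (fun x => nac x.symm)
      (fun x => nbd x.symm) (fun x => nad x.symm) ha'
      ebc.symm eac.symm ebd.symm ead.symm oy0.1
  -- FTTF : P5 a b y0 c d
  · refine Or.inr (Or.inr (Or.inr (Or.inr (Or.inl ?_))))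
    exact iso_P5 a b y0 c d
      (fun w => by rcases cov w with rfl|rfl|rfl|rfl|rfl <;> tauto)
      hab hb'.symm hc' hcd (fun x => ha' x.symm) nac nad nbc nbd hd'
      oy0.1.symm eac ead ebc ebd oy0.2.2.2
  -- FTFT : P5 a b y0 d c
  · refine Or.inr (Or.inr (Or.inr (Or.inr (Or.inl ?_))))
    exact iso_P5 a b y0 d c
      (fun w => by rcases cov w with rfl|rfl|rfl|rfl|rfl <;> tauto)
      hab hb'.symm hd' hcd.symm (fun x => ha' x.symm) nad nac nbd nbc hc'
      oy0.1.symm ead eac ebd ebc oy0.2.2.1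
  -- FTFF : impossible
  · rcases hc0 with h' | h'
    · exact absurd h' hc'
    · exact absurd h' hd'
  -- FF** : impossible (4 cases)
  · rcases hb0 with h' | h'
    · exact absurd h' ha'
    · exact absurd h' hb'
  · rcases hb0 with h' | h'
    · exact absurd h' ha'
    · exact absurd h' hb'
  · rcases hb0 with h' | h'
    · exact absurd h' ha'
    · exact absurd h' hb'
  · rcases hb0 with h' | h'
    · exact absurd h' ha'
    · exact absurd h' hb'

end masters

end F

end StmtAux

/-- Theorem 9. A connected graph `G` not isomorphic to any
exceptional graph is split iff every edge contraction of `G` is split. -/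
theorem stmt7 {V : Type*} [Fintype V] [DecidableEq V] (G : SimpleGraph V)
    (hG : G.Connected) (hexc : ¬ IsExceptional G) :
    G.IsSplit ↔ ∀ u v : V, G.Adj u v → (G.contractEdge u v).IsSplit := by
  constructor
  · intro hsp u v huv
    exact StmtAux.split_contract hsp huv
  · intro H
    apply StmtAux.foldesHammer
    · intro p q r s hcfg
      exact (hexc (StmtAux.twok2_master H hG
        (fun p' q' r' s' h' => hexc (StmtAux.c4_master H hG h')) hcfg)).elim
    · intro p q r s hcfg
      exact (hexc (StmtAux.c4_master H hG hcfg)).elim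
    · intro p q r s t hcfg
      exact (StmtAux.no_c5 H hcfg).elim
end

section
/- If G is a 2K_2-free simple graph, then for every edge e ∈ E(G), the contraction G/e is 2K_2-free. -/
open SimpleGraph

lemma twoK2_adj (i j : Fin 4) : twoK2.Adj i j ↔
    (i=0∧j=1)∨(i=1∧j=0)∨(i=2∧j=3)∨(i=3∧j=2) := by
  fin_cases i <;> fin_cases j <;> simp [twoK2, fromEdgeSet_adj, Sym2.eq_iff]

lemma hasInduced_twoK2_iff {V : Type*} (G : SimpleGraph V) :
    G.HasInduced twoK2 ↔ ∃ a b c d : V,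
      a ≠ b ∧ a ≠ c ∧ a ≠ d ∧ b ≠ c ∧ b ≠ d ∧ c ≠ d ∧
      G.Adj a b ∧ G.Adj c d ∧ ¬G.Adj a c ∧ ¬G.Adj a d ∧ ¬G.Adj b c ∧ ¬G.Adj b d := by
  constructor
  · rintro ⟨S, ⟨f⟩⟩
    set g := f.symm
    have hadj : ∀ i j : Fin 4, G.Adj (g i).1 (g j).1 ↔ twoK2.Adj i j := by
      intro i j
      have := g.map_adj_iff (v := i) (w := j)
      simpa [comap_adj] using this
    have hne : ∀ i j : Fin 4, i ≠ j → (g i).1 ≠ (g j).1 := by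
      intro i j hij h
      exact hij (g.toEquiv.injective (Subtype.ext h))
    refine ⟨(g 0).1, (g 1).1, (g 2).1, (g 3).1,
      hne 0 1 (by decide), hne 0 2 (by decide), hne 0 3 (by decide),
      hne 1 2 (by decide), hne 1 3 (by decide), hne 2 3 (by decide),
      ?_, ?_, ?_, ?_, ?_, ?_⟩ <;>
    simp only [hadj, twoK2_adj] <;> decide
  · rintro ⟨a, b, c, d, hab, hac, had, hbc, hbd, hcd, Gab, Gcd, nac, nad, nbc, nbd⟩
    refine ⟨{a, b, c, d}, ⟨?_⟩⟩
    have ha : a ∈ ({a,b,c,d} : Set V) := by simp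
    have hb : b ∈ ({a,b,c,d} : Set V) := by simp
    have hc : c ∈ ({a,b,c,d} : Set V) := by simp
    have hd : d ∈ ({a,b,c,d} : Set V) := by simp
    let e : Fin 4 → ({a,b,c,d} : Set V) := ![⟨a, ha⟩, ⟨b, hb⟩, ⟨c, hc⟩, ⟨d, hd⟩]
    have hinj : Function.Injective e := by
      intro i j h
      fin_cases i <;> fin_cases j <;> simp_all [e, Subtype.ext_iff] <;>
        first | rfl | (exfalso; tauto)
    have hsurj : Function.Surjective e := by
      rintro ⟨x, hx⟩
      rcases hx with h | h | h | h
      · exact ⟨0, by simp [e, h]⟩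
      · exact ⟨1, by simp [e]; exact Subtype.ext h.symm⟩
      · exact ⟨2, by simp [e]; exact Subtype.ext h.symm⟩
      · exact ⟨3, by simp [e]; exact Subtype.ext h.symm⟩
    let eq : Fin 4 ≃ ({a,b,c,d} : Set V) := Equiv.ofBijective e ⟨hinj, hsurj⟩
    refine (Iso.symm ⟨eq, ?_⟩)
    intro i j
    show (G.induce _).Adj (e i) (e j) ↔ twoK2.Adj i j
    fin_cases i <;> fin_cases j <;>
      simp [e, twoK2_adj, comap_adj, Gab, Gcd, Gab.symm, Gcd.symm, nac, nad, nbc, nbd,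
        fun h => nac (G.adj_symm h), fun h => nad (G.adj_symm h), fun h => nbc (G.adj_symm h),
        fun h => nbd (G.adj_symm h), G.loopless.irrefl a, hab, hac, had, hbc, hbd, hcd] <;>
      first
        | exact fun h => nac (G.adj_symm h)
        | exact fun h => nad (G.adj_symm h)
        | exact fun h => nbc (G.adj_symm h)
        | exact fun h => nbd (G.adj_symm h)

/-- Claim 12.5. Edge contraction preserves `2K₂`-freeness. -/
theorem stmt10 {V : Type*} [Fintype V] [DecidableEq V] (G : SimpleGraph V)
    (h2K2 : ¬ G.HasInduced twoK2) :
    ∀ u v : V, G.Adj u v → ¬ (G.contractEdge u v).HasInduced twoK2 := by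
  intro u v huv hInd
  rw [hasInduced_twoK2_iff] at hInd
  obtain ⟨a, b, c, d, hab, hac, had, hbc, hbd, hcd,
    ⟨-, e1⟩, ⟨-, e2⟩, nac, nad, nbc, nbd⟩ := hInd
  rw [hasInduced_twoK2_iff] at h2K2
  apply h2K2
  -- val distinctness
  have vab : a.1 ≠ b.1 := fun h => hab (Subtype.ext h)
  have vac : a.1 ≠ c.1 := fun h => hac (Subtype.ext h)
  have vad : a.1 ≠ d.1 := fun h => had (Subtype.ext h)
  have vbc : b.1 ≠ c.1 := fun h => hbc (Subtype.ext h)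
  have vbd : b.1 ≠ d.1 := fun h => hbd (Subtype.ext h)
  have vcd : c.1 ≠ d.1 := fun h => hcd (Subtype.ext h)
  -- unpack contraction non-adjacencies
  have nope : ∀ x y : {x : V // x ≠ v}, x ≠ y → ¬(G.contractEdge u v).Adj x y →
      ¬G.Adj x.1 y.1 ∧ ¬(x.1 = u ∧ G.Adj v y.1) ∧ ¬(y.1 = u ∧ G.Adj v x.1) := by
    intro x y hxy hn
    constructor
    · exact fun h => hn ⟨hxy, Or.inl h⟩
    constructor
    · exact fun h => hn ⟨hxy, Or.inr (Or.inl h)⟩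
    · exact fun h => hn ⟨hxy, Or.inr (Or.inr h)⟩
  obtain ⟨nac1, nac2, nac3⟩ := nope a c hac nac
  obtain ⟨nad1, nad2, nad3⟩ := nope a d had nad
  obtain ⟨nbc1, nbc2, nbc3⟩ := nope b c hbc nbc
  obtain ⟨nbd1, nbd2, nbd3⟩ := nope b d hbd nbd
  rcases e1 with e1 | ⟨hau, hvb⟩ | ⟨hbu, hva⟩
  · rcases e2 with e2 | ⟨hcu, hvd⟩ | ⟨hdu, hvc⟩
    · -- both real edges
      exact ⟨a.1, b.1, c.1, d.1, vab, vac, vad, vbc, vbd, vcd, e1, e2,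
        nac1, nad1, nbc1, nbd1⟩
    · -- c = u : use {a, b, v, d}
      refine ⟨a.1, b.1, v, d.1, vab, a.2, vad, b.2, vbd, Ne.symm d.2, e1, hvd,
        ?_, nad1, ?_, nbd1⟩
      · exact fun h => nac3 ⟨hcu, h.symm⟩
      · exact fun h => nbc3 ⟨hcu, h.symm⟩
    · -- d = u : use {a, b, v, c}
      refine ⟨a.1, b.1, v, c.1, vab, a.2, vac, b.2, vbc, Ne.symm c.2, e1, hvc,
        ?_, nac1, ?_, nbc1⟩
      · exact fun h => nad3 ⟨hdu, h.symm⟩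
      · exact fun h => nbd3 ⟨hdu, h.symm⟩
  · -- a = u
    have e2' : G.Adj c.1 d.1 := by
      rcases e2 with e2 | ⟨hcu, _⟩ | ⟨hdu, _⟩
      · exact e2
      · exact absurd (hau.trans hcu.symm) vac
      · exact absurd (hau.trans hdu.symm) vad
    refine ⟨v, b.1, c.1, d.1, Ne.symm b.2, Ne.symm c.2, Ne.symm d.2, vbc, vbd, vcd,
      hvb, e2', ?_, ?_, nbc1, nbd1⟩
    · exact fun h => nac2 ⟨hau, h⟩
    · exact fun h => nad2 ⟨hau, h⟩
  · -- b = u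
    have e2' : G.Adj c.1 d.1 := by
      rcases e2 with e2 | ⟨hcu, _⟩ | ⟨hdu, _⟩
      · exact e2
      · exact absurd (hbu.trans hcu.symm) vbc
      · exact absurd (hbu.trans hdu.symm) vbd
    refine ⟨v, a.1, c.1, d.1, Ne.symm a.2, Ne.symm c.2, Ne.symm d.2, vac, vad, vcd,
      hva, e2', ?_, ?_, nac1, nad1⟩
    · exact fun h => nbc2 ⟨hbu, h⟩
    · exact fun h => nbd2 ⟨hbu, h⟩
end

section
/- Let G be a simple graph and e ∈ E(G). If the contraction G/e contains an induced cycle C_4, then G contains an induced C_4 or an induced C_5. -/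
open SimpleGraph

/-- Claim 12.6. If an edge contraction of `G` has an induced `C₄`,
then `G` has an induced `C₄` or an induced `C₅`. -/
lemma aux_hasInduced {V : Type*} (G : SimpleGraph V) {n : ℕ} (f : Fin n → V)
    (hf : Function.Injective f)
    (hadj : ∀ i j, G.Adj (f i) (f j) ↔ (cycleGraph n).Adj i j) :
    G.HasInduced (cycleGraph n) := by
  refine ⟨Set.range f, ⟨⟨(Equiv.ofInjective f hf).symm, ?_⟩⟩⟩
  intro a b
  have ha : (a : V) = f ((Equiv.ofInjective f hf).symm a) := by
    conv_lhs => rw [← (Equiv.ofInjective f hf).apply_symm_apply a]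
    rfl
  have hb : (b : V) = f ((Equiv.ofInjective f hf).symm b) := by
    conv_lhs => rw [← (Equiv.ofInjective f hf).apply_symm_apply b]
    rfl
  show (cycleGraph n).Adj _ _ ↔ (SimpleGraph.induce (Set.range f) G).Adj a b
  rw [comap_adj]
  show _ ↔ G.Adj (a:V) (b:V)
  rw [ha, hb, hadj]


lemma aux_C4 {V : Type*} (G : SimpleGraph V) (w0 w1 w2 w3 : V)
    (d01 : w0 ≠ w1) (d02 : w0 ≠ w2) (d03 : w0 ≠ w3) (d12 : w1 ≠ w2)
    (d13 : w1 ≠ w3) (d23 : w2 ≠ w3)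
    (a01 : G.Adj w0 w1) (a12 : G.Adj w1 w2) (a23 : G.Adj w2 w3) (a30 : G.Adj w3 w0)
    (n02 : ¬ G.Adj w0 w2) (n13 : ¬ G.Adj w1 w3) :
    G.HasInduced (cycleGraph 4) := by
  apply aux_hasInduced G ![w0, w1, w2, w3]
  · intro i j hij
    fin_cases i <;> fin_cases j <;> simp_all <;>
      first
        | rfl
        | exact absurd hij d01 | exact absurd hij d02 | exact absurd hij d03
        | exact absurd hij d12 | exact absurd hij d13 | exact absurd hij d23
        | exact absurd hij.symm d01 | exact absurd hij.symm d02 | exact absurd hij.symm d03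
        | exact absurd hij.symm d12 | exact absurd hij.symm d13 | exact absurd hij.symm d23
  · intro i j
    fin_cases i <;> fin_cases j <;>
      simp only [Matrix.cons_val_zero, Matrix.cons_val_one, Matrix.head_cons,
        Matrix.cons_val_two, Matrix.tail_cons, Matrix.cons_val_three, Matrix.head_fin_const,
        Fin.isValue] <;>
      first
        | exact iff_of_false (G.loopless.irrefl _) (by decide)
        | exact iff_of_true (by assumption) (by decide)
        | exact iff_of_true (SimpleGraph.Adj.symm (by assumption)) (by decide)
        | exact iff_of_false (by assumption) (by decide)
        | exact iff_of_false (fun hh => absurd hh.symm (by assumption)) (by decide)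

lemma aux_C5 {V : Type*} (G : SimpleGraph V) (w0 w1 w2 w3 w4 : V)
    (d01 : w0 ≠ w1) (d02 : w0 ≠ w2) (d03 : w0 ≠ w3) (d04 : w0 ≠ w4) (d12 : w1 ≠ w2)
    (d13 : w1 ≠ w3) (d14 : w1 ≠ w4) (d23 : w2 ≠ w3) (d24 : w2 ≠ w4) (d34 : w3 ≠ w4)
    (a01 : G.Adj w0 w1) (a12 : G.Adj w1 w2) (a23 : G.Adj w2 w3) (a34 : G.Adj w3 w4)
    (a40 : G.Adj w4 w0)
    (n02 : ¬ G.Adj w0 w2) (n03 : ¬ G.Adj w0 w3) (n13 : ¬ G.Adj w1 w3)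
    (n14 : ¬ G.Adj w1 w4) (n24 : ¬ G.Adj w2 w4) :
    G.HasInduced (cycleGraph 5) := by
  apply aux_hasInduced G ![w0, w1, w2, w3, w4]
  · intro i j hij
    fin_cases i <;> fin_cases j <;> simp_all
  · intro i j
    fin_cases i <;> fin_cases j <;>
      simp only [Matrix.cons_val_zero, Matrix.cons_val_one, Matrix.head_cons,
        Matrix.cons_val_two, Matrix.tail_cons, Matrix.cons_val_three, Matrix.cons_val_four,
        Matrix.cons_val_succ, Matrix.head_fin_const, Fin.isValue] <;>
      first
        | exact iff_of_false (G.loopless.irrefl _) (by decide)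
        | exact iff_of_true (by assumption) (by decide)
        | exact iff_of_true (SimpleGraph.Adj.symm (by assumption)) (by decide)
        | exact iff_of_false (by assumption) (by decide)
        | exact iff_of_false (fun hh => absurd hh.symm (by assumption)) (by decide)

lemma aux_key {V : Type*} (G : SimpleGraph V) (u v b c d : V) (huv : G.Adj u v)
    (dub : u ≠ b) (duc : u ≠ c) (dud : u ≠ d) (dbc : b ≠ c) (dbd : b ≠ d) (dcd : c ≠ d)
    (dvb : v ≠ b) (dvc : v ≠ c) (dvd : v ≠ d)
    (hb : G.Adj u b ∨ G.Adj v b) (hd : G.Adj u d ∨ G.Adj v d)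
    (hbc : G.Adj b c) (hcd : G.Adj c d)
    (nuc : ¬ G.Adj u c) (nvc : ¬ G.Adj v c) (nbd : ¬ G.Adj b d) :
    G.HasInduced (cycleGraph 4) ∨ G.HasInduced (cycleGraph 5) := by
  classical
  by_cases hub : G.Adj u b
  · by_cases hud : G.Adj u d
    · exact Or.inl (aux_C4 G u b c d dub duc dud dbc dbd dcd hub hbc hcd hud.symm nuc nbd)
    · have hvd : G.Adj v d := hd.resolve_left hud
      by_cases hvb : G.Adj v b
      · exact Or.inl (aux_C4 G v b c d dvb dvc dvd dbc dbd dcd hvb hbc hcd hvd.symm nvc nbd)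
      · exact Or.inr (aux_C5 G u b c d v dub duc dud huv.ne dbc dbd dvb.symm dcd dvc.symm
          dvd.symm hub hbc hcd hvd.symm huv.symm nuc hud nbd
          (fun hh => hvb hh.symm) (fun hh => nvc hh.symm))
  · have hvb : G.Adj v b := hb.resolve_left hub
    by_cases hvd : G.Adj v d
    · exact Or.inl (aux_C4 G v b c d dvb dvc dvd dbc dbd dcd hvb hbc hcd hvd.symm nvc nbd)
    · have hud : G.Adj u d := hd.resolve_right hvd
      exact Or.inr (aux_C5 G u d c b v dud duc dub huv.ne dcd.symm dbd.symm dvd.symm dbc.symm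
        dvc.symm dvb.symm hud hcd.symm hbc.symm hvb.symm huv.symm nuc hub
        (fun hh => nbd hh.symm) (fun hh => hvd hh.symm) (fun hh => nvc hh.symm))

lemma aux_main0 {V : Type*} (G : SimpleGraph V) (u v : V) (huv : G.Adj u v)
    (w : Fin 4 → V) (hwv : ∀ i, w i ≠ v) (hwinj : Function.Injective w)
    (hA : ∀ i j, (cycleGraph 4).Adj i j →
      (G.Adj (w i) (w j) ∨ (w i = u ∧ G.Adj v (w j)) ∨ (w j = u ∧ G.Adj v (w i))))
    (hN : ∀ i j, i ≠ j → ¬ (cycleGraph 4).Adj i j →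
      ¬ (G.Adj (w i) (w j) ∨ (w i = u ∧ G.Adj v (w j)) ∨ (w j = u ∧ G.Adj v (w i))))
    (hu : w 0 = u) :
    G.HasInduced (cycleGraph 4) ∨ G.HasInduced (cycleGraph 5) := by
  have dist : ∀ i j : Fin 4, i ≠ j → w i ≠ w j := fun i j hij e => hij (hwinj e)
  have h1u : w 1 ≠ u := hu ▸ (dist 1 0 (by decide))
  have h2u : w 2 ≠ u := hu ▸ (dist 2 0 (by decide))
  have h3u : w 3 ≠ u := hu ▸ (dist 3 0 (by decide))
  have hb : G.Adj u (w 1) ∨ G.Adj v (w 1) := by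
    rcases hA 0 1 (by decide) with h | ⟨_, h⟩ | ⟨h, _⟩
    · exact Or.inl (hu ▸ h)
    · exact Or.inr h
    · exact absurd h h1u
  have hd : G.Adj u (w 3) ∨ G.Adj v (w 3) := by
    rcases hA 3 0 (by decide) with h | ⟨h, _⟩ | ⟨_, h⟩
    · exact Or.inl (hu ▸ h.symm)
    · exact absurd h h3u
    · exact Or.inr h
  have hbc : G.Adj (w 1) (w 2) := by
    rcases hA 1 2 (by decide) with h | ⟨h, _⟩ | ⟨h, _⟩
    · exact h
    · exact absurd h h1u
    · exact absurd h h2u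
  have hcd : G.Adj (w 2) (w 3) := by
    rcases hA 2 3 (by decide) with h | ⟨h, _⟩ | ⟨h, _⟩
    · exact h
    · exact absurd h h2u
    · exact absurd h h3u
  have h02 := hN 0 2 (by decide) (by decide)
  have nuc : ¬ G.Adj u (w 2) := fun hh => h02 (Or.inl (hu ▸ hh))
  have nvc : ¬ G.Adj v (w 2) := fun hh => h02 (Or.inr (Or.inl ⟨hu, hh⟩))
  have nbd : ¬ G.Adj (w 1) (w 3) := fun hh => hN 1 3 (by decide) (by decide) (Or.inl hh)
  exact aux_key G u v (w 1) (w 2) (w 3) huv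
    (hu ▸ dist 0 1 (by decide)) (hu ▸ dist 0 2 (by decide)) (hu ▸ dist 0 3 (by decide))
    (dist 1 2 (by decide)) (dist 1 3 (by decide)) (dist 2 3 (by decide))
    (fun e => hwv 1 e.symm) (fun e => hwv 2 e.symm) (fun e => hwv 3 e.symm)
    hb hd hbc hcd nuc nvc nbd

lemma aux_main {V : Type*} (G : SimpleGraph V) (u v : V) (huv : G.Adj u v)
    (w : Fin 4 → V) (hwv : ∀ i, w i ≠ v) (hwinj : Function.Injective w)
    (hA : ∀ i j, (cycleGraph 4).Adj i j →
      (G.Adj (w i) (w j) ∨ (w i = u ∧ G.Adj v (w j)) ∨ (w j = u ∧ G.Adj v (w i))))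
    (hN : ∀ i j, i ≠ j → ¬ (cycleGraph 4).Adj i j →
      ¬ (G.Adj (w i) (w j) ∨ (w i = u ∧ G.Adj v (w j)) ∨ (w j = u ∧ G.Adj v (w i)))) :
    G.HasInduced (cycleGraph 4) ∨ G.HasInduced (cycleGraph 5) := by
  classical
  by_cases hu : ∃ k, w k = u
  · obtain ⟨k, hk⟩ := hu
    have htrans : ∀ i j : Fin 4, (cycleGraph 4).Adj (i + k) (j + k) ↔ (cycleGraph 4).Adj i j := by
      intro i j
      rw [cycleGraph_adj, cycleGraph_adj, add_sub_add_right_eq_sub, add_sub_add_right_eq_sub]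
    refine aux_main0 G u v huv (fun i => w (i + k)) (fun i => hwv _) ?_ ?_ ?_ ?_
    · intro i j hij
      have := hwinj hij
      exact add_right_cancel this
    · intro i j hij
      exact hA _ _ ((htrans i j).mpr hij)
    · intro i j hne hij
      exact hN _ _ (fun e => hne (add_right_cancel e)) (fun hh => hij ((htrans i j).mp hh))
    · simpa using hk
  · push_neg at hu
    have dist : ∀ i j : Fin 4, i ≠ j → w i ≠ w j := fun i j hij e => hij (hwinj e)
    have adj : ∀ i j, (cycleGraph 4).Adj i j → G.Adj (w i) (w j) := by
      intro i j hij
      rcases hA i j hij with h | ⟨h, _⟩ | ⟨h, _⟩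
      · exact h
      · exact absurd h (hu i)
      · exact absurd h (hu j)
    refine Or.inl (aux_C4 G (w 0) (w 1) (w 2) (w 3)
      (dist 0 1 (by decide)) (dist 0 2 (by decide)) (dist 0 3 (by decide))
      (dist 1 2 (by decide)) (dist 1 3 (by decide)) (dist 2 3 (by decide))
      (adj 0 1 (by decide)) (adj 1 2 (by decide)) (adj 2 3 (by decide)) (adj 3 0 (by decide))
      (fun hh => hN 0 2 (by decide) (by decide) (Or.inl hh)) (fun hh => hN 1 3 (by decide) (by decide) (Or.inl hh)))


theorem stmt11 {V : Type*} [Fintype V] [DecidableEq V] (G : SimpleGraph V)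
    (u v : V) (huv : G.Adj u v)
    (h : (G.contractEdge u v).HasInduced (cycleGraph 4)) :
    G.HasInduced (cycleGraph 4) ∨ G.HasInduced (cycleGraph 5) := by
  obtain ⟨S, ⟨φ⟩⟩ := h
  set H := G.contractEdge u v with hH
  let q : Fin 4 → {x : V // x ≠ v} := fun i => (φ.symm i : S).1
  let w : Fin 4 → V := fun i => (q i).1
  have hqinj : Function.Injective q := fun i j hij =>
    φ.symm.toEquiv.injective (Subtype.ext hij)
  have hwinj : Function.Injective w := fun i j hij => hqinj (Subtype.ext hij)
  have hadj : ∀ i j, H.Adj (q i) (q j) ↔ (cycleGraph 4).Adj i j := by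
    intro i j
    exact φ.symm.map_rel_iff
  have hcontract : ∀ i j, H.Adj (q i) (q j) ↔ (q i ≠ q j ∧
      (G.Adj (w i) (w j) ∨ (w i = u ∧ G.Adj v (w j)) ∨ (w j = u ∧ G.Adj v (w i)))) := by
    intro i j
    rfl
  refine aux_main G u v huv w (fun i => (q i).2) hwinj ?_ ?_
  · intro i j hij
    exact ((hcontract i j).mp ((hadj i j).mpr hij)).2
  · intro i j hij' hij hdisj
    exact hij ((hadj i j).mp ((hcontract i j).mpr ⟨fun e => hij' (hqinj e), hdisj⟩))
end

section
/- Let G be a connected (2K_2, claw)-free simple graph and let C ⊆ V(G) be a vertex set inducing a 4-cycle in G. If S is an independent set in G with |S| ≥ 3, then S ∩ C = ∅. -/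
open SimpleGraph

/-- The claw `K_{1,3}`. -/
def clawGraph : SimpleGraph (Fin 4) := fromEdgeSet {s(0,1), s(0,2), s(0,3)}

lemma hasInduced_of_fun {V : Type*} (G : SimpleGraph V) (H : SimpleGraph (Fin 4))
    (f : Fin 4 → V) (hf : Function.Injective f)
    (h : ∀ i j, G.Adj (f i) (f j) ↔ H.Adj i j) : G.HasInduced H := by
  refine ⟨Set.range f, ⟨⟨(Equiv.ofInjective f hf).symm, ?_⟩⟩⟩
  intro a b
  have ha : f ((Equiv.ofInjective f hf).symm a) = (a : V) :=
    Equiv.apply_ofInjective_symm hf a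
  have hb : f ((Equiv.ofInjective f hf).symm b) = (b : V) :=
    Equiv.apply_ofInjective_symm hf b
  rw [← h]
  rw [ha, hb]
  simp [comap_adj]

lemma mkClaw {V : Type*} (G : SimpleGraph V) {w x y z : V}
    (hwx : G.Adj w x) (hwy : G.Adj w y) (hwz : G.Adj w z)
    (hxy : ¬ G.Adj x y) (hxz : ¬ G.Adj x z) (hyz : ¬ G.Adj y z)
    (nxy : x ≠ y) (nxz : x ≠ z) (nyz : y ≠ z) : G.HasInduced clawGraph := by
  have hwx' := hwx.ne
  have hwy' := hwy.ne
  have hwz' := hwz.ne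
  apply hasInduced_of_fun G clawGraph ![w, x, y, z]
  · intro i j hij
    fin_cases i <;> fin_cases j <;> simp_all
  · have hyx : ¬ G.Adj y x := fun h => hxy h.symm
    have hzx : ¬ G.Adj z x := fun h => hxz h.symm
    have hzy : ¬ G.Adj z y := fun h => hyz h.symm
    intro i j
    fin_cases i <;> fin_cases j <;>
      simp_all [clawGraph, hwx.symm, hwy.symm, hwz.symm]

lemma mk2K2 {V : Type*} (G : SimpleGraph V) {p q r t : V}
    (hpq : G.Adj p q) (hrt : G.Adj r t)
    (hpr : ¬ G.Adj p r) (hpt : ¬ G.Adj p t) (hqr : ¬ G.Adj q r) (hqt : ¬ G.Adj q t)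
    (npr : p ≠ r) (npt : p ≠ t) (nqr : q ≠ r) (nqt : q ≠ t) : G.HasInduced twoK2 := by
  have hpq' := hpq.ne
  have hrt' := hrt.ne
  apply hasInduced_of_fun G twoK2 ![p, q, r, t]
  · intro i j hij
    fin_cases i <;> fin_cases j <;> simp_all
  · have h1 : ¬ G.Adj r p := fun h => hpr h.symm
    have h2 : ¬ G.Adj t p := fun h => hpt h.symm
    have h3 : ¬ G.Adj r q := fun h => hqr h.symm
    have h4 : ¬ G.Adj t q := fun h => hqt h.symm
    intro i j
    fin_cases i <;> fin_cases j <;>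
      simp_all [twoK2, hpq.symm, hrt.symm]

/-- Claim 12.11. In a connected `(2K₂, claw)`-free graph, an
independent set of size at least `3` is disjoint from the vertex set of any induced
4-cycle. -/
theorem stmt17 {V : Type*} [Fintype V] [DecidableEq V] (G : SimpleGraph V)
    (hG : G.Connected) (h2K2 : ¬ G.HasInduced twoK2) (hclaw : ¬ G.HasInduced clawGraph)
    (C : Set V) (hC : Nonempty (G.induce C ≃g cycleGraph 4))
    (S : Set V) (hS : G.IsIndependentSet S) (hcard : 3 ≤ S.ncard) :
    S ∩ C = ∅ := by
  rw [Set.eq_empty_iff_forall_notMem]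
  rintro s ⟨hsS, hsC⟩
  obtain ⟨e⟩ := hC
  -- two other independent vertices
  obtain ⟨a, b, haS, hbS, hab, has, hbs⟩ :
      ∃ a b, a ∈ S ∧ b ∈ S ∧ a ≠ b ∧ a ≠ s ∧ b ≠ s := by
    obtain ⟨t, htS, ht3⟩ := Set.exists_subset_card_eq hcard
    obtain ⟨x, y, z, hxy, hxz, hyz, rfl⟩ := Set.ncard_eq_three.mp ht3
    have hx : x ∈ S := htS (by simp)
    have hy : y ∈ S := htS (by simp)
    have hz : z ∈ S := htS (by simp)
    by_cases hxs : x = s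
    · exact ⟨y, z, hy, hz, hyz, fun h => hxy (hxs.trans h.symm),
        fun h => hxz (hxs.trans h.symm)⟩
    · by_cases hys : y = s
      · exact ⟨x, z, hx, hz, hxz, hxs, fun h => hyz (hys.trans h.symm)⟩
      · exact ⟨x, y, hx, hy, hxy, hxs, hys⟩
  have hsa : ¬ G.Adj s a := hS hsS haS (Ne.symm has)
  have hsb : ¬ G.Adj s b := hS hsS hbS (Ne.symm hbs)
  have hba : ¬ G.Adj a b := hS haS hbS hab
  have hba' : ¬ G.Adj b a := fun h => hba h.symm
  set i : Fin 4 := e ⟨s, hsC⟩ with hi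
  set c : Fin 4 → V := fun j => (e.symm (i + j) : V) with hc
  have hrot : ∀ i j k : Fin 4, (cycleGraph 4).Adj (i + j) (i + k) ↔ (cycleGraph 4).Adj j k := by
    decide
  have hadj : ∀ j k, G.Adj (c j) (c k) ↔ (cycleGraph 4).Adj j k := by
    intro j k
    rw [← hrot i j k]
    have := e.symm.map_adj_iff (v := i + j) (w := i + k)
    rw [← this]
    simp [hc, comap_adj]
  have hc0 : c 0 = s := by
    simp [hc, hi]
  have hcmem : ∀ j, c j ∈ C := fun j => (e.symm (i + j)).2
  have hcinj : Function.Injective c := by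
    intro j k h
    have h2 : e.symm (i + j) = e.symm (i + k) := Subtype.ext h
    have h3 := e.symm.injective h2
    exact add_left_cancel h3
  have hsurj : ∀ v, v ∈ C → ∃ j, c j = v := by
    intro v hv
    refine ⟨e ⟨v, hv⟩ - i, ?_⟩
    have : i + (e ⟨v, hv⟩ - i) = e ⟨v, hv⟩ := add_sub_cancel _ _
    simp [hc, this]
  have hA : ∀ j k, (cycleGraph 4).Adj j k → G.Adj (c j) (c k) := fun j k h => (hadj j k).mpr h
  have hN : ∀ j k, ¬ (cycleGraph 4).Adj j k → ¬ G.Adj (c j) (c k) :=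
    fun j k h hh => h ((hadj j k).mp hh)
  have hne : ∀ j k : Fin 4, j ≠ k → c j ≠ c k := fun j k h hh => h (hcinj hh)
  have hnotC : ∀ {x : V}, x ∉ C → ∀ j, x ≠ c j := fun hx j h => hx (h ▸ hcmem j)
  -- key: a vertex outside C with no neighbour in C yields a contradiction
  have key : ∀ x : V, x ∉ C → (∀ j, ¬ G.Adj x (c j)) → False := by
    intro x hxC hxc
    have hxs : x ≠ s := fun h => hxC (h ▸ hsC)
    obtain ⟨p⟩ := hG x s
    obtain ⟨w, hw⟩ : ∃ w, G.Adj x w := by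
      cases p with
      | nil => exact absurd rfl hxs
      | cons h _ => exact ⟨_, h⟩
    have hwC : w ∉ C := by
      intro h
      obtain ⟨j, hj⟩ := hsurj w h
      exact hxc j (hj ▸ hw)
    have hxc' : ∀ j, ¬ G.Adj (c j) x := fun j h => hxc j h.symm
    have cover : ∀ j : Fin 4, G.Adj w (c j) ∨ G.Adj w (c (j + 1)) := by
      intro j
      by_contra h
      push_neg at h
      have hstep : ∀ j : Fin 4, (cycleGraph 4).Adj j (j + 1) := by decide
      exact h2K2 (mk2K2 G hw (hA j (j + 1) (hstep j))
        (hxc j) (hxc (j + 1)) h.1 h.2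
        (hnotC hxC j) (hnotC hxC (j + 1)) (hnotC hwC j) (hnotC hwC (j + 1)))
    have hopp : (G.Adj w (c 0) ∧ G.Adj w (c 2)) ∨ (G.Adj w (c 1) ∧ G.Adj w (c 3)) := by
      have h0 := cover 0
      have h1 := cover 1
      have h2 := cover 2
      have h3 := cover 3
      have e1 : (0 : Fin 4) + 1 = 1 := by decide
      have e2 : (1 : Fin 4) + 1 = 2 := by decide
      have e3 : (2 : Fin 4) + 1 = 3 := by decide
      have e4 : (3 : Fin 4) + 1 = 0 := by decide
      rw [e1] at h0; rw [e2] at h1; rw [e3] at h2; rw [e4] at h3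
      tauto
    rcases hopp with ⟨h1, h2⟩ | ⟨h1, h2⟩
    · exact hclaw (mkClaw G hw.symm h1 h2 (hxc 0) (hxc 2)
        (hN 0 2 (by decide)) (hnotC hxC 0) (hnotC hxC 2) (hne 0 2 (by decide)))
    · exact hclaw (mkClaw G hw.symm h1 h2 (hxc 1) (hxc 3)
        (hN 1 3 (by decide)) (hnotC hxC 1) (hnotC hxC 3) (hne 1 3 (by decide)))
  -- a vertex of S other than s that lies in C must be c 2
  have hinC : ∀ x : V, x ≠ s → ¬ G.Adj s x → x ∈ C → x = c 2 := by
    intro x hxs hsx hxC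
    obtain ⟨j, hj⟩ := hsurj x hxC
    subst hj
    fin_cases j
    · exact absurd hc0 hxs
    · exact absurd (hc0 ▸ hA 0 1 (by decide)) hsx
    · rfl
    · exact absurd (hc0 ▸ hA 0 3 (by decide)) hsx
  -- neighbourhood profile of an outside vertex nonadjacent to s
  have prof : ∀ x : V, x ∉ C → ¬ G.Adj (c 0) x →
      (∀ j, ¬ G.Adj x (c j)) ∨ (G.Adj x (c 1) ∧ G.Adj x (c 2)) ∨
        (G.Adj x (c 3) ∧ G.Adj x (c 2)) := by
    intro x hxC hx0
    have hx0' : ¬ G.Adj x (c 0) := fun h => hx0 h.symm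
    by_cases h1 : G.Adj x (c 1)
    · refine Or.inr (Or.inl ⟨h1, ?_⟩)
      by_contra h2
      exact hclaw (mkClaw G (hA 1 0 (by decide)) (hA 1 2 (by decide)) h1.symm
        (hN 0 2 (by decide)) hx0 (fun h => h2 h.symm)
        (hne 0 2 (by decide)) ((hnotC hxC 0).symm) ((hnotC hxC 2).symm))
    · by_cases h3 : G.Adj x (c 3)
      · refine Or.inr (Or.inr ⟨h3, ?_⟩)
        by_contra h2
        exact hclaw (mkClaw G (hA 3 0 (by decide)) (hA 3 2 (by decide)) h3.symm
          (hN 0 2 (by decide)) hx0 (fun h => h2 h.symm)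
          (hne 0 2 (by decide)) ((hnotC hxC 0).symm) ((hnotC hxC 2).symm))
      · left
        intro j
        fin_cases j
        · exact hx0'
        · exact h1
        · intro h2
          exact hclaw (mkClaw G (hA 2 1 (by decide)) (hA 2 3 (by decide)) h2.symm
            (hN 1 3 (by decide)) (fun h => h1 h.symm) (fun h => h3 h.symm)
            (hne 1 3 (by decide)) ((hnotC hxC 1).symm) ((hnotC hxC 3).symm))
        · exact h3
  have hsa' : ¬ G.Adj (c 0) a := hc0 ▸ hsa
  have hsb' : ¬ G.Adj (c 0) b := hc0 ▸ hsb
  by_cases haC : a ∈ C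
  · have ha2 : a = c 2 := hinC a has hsa haC
    have hbC : b ∉ C := by
      intro h
      exact hab (ha2.trans (hinC b hbs hsb h).symm)
    rcases prof b hbC hsb' with h | ⟨-, h2⟩ | ⟨-, h2⟩
    · exact key b hbC h
    · exact hba' (ha2 ▸ h2)
    · exact hba' (ha2 ▸ h2)
  · by_cases hbC : b ∈ C
    · have hb2 : b = c 2 := hinC b hbs hsb hbC
      rcases prof a haC hsa' with h | ⟨-, h2⟩ | ⟨-, h2⟩
      · exact key a haC h
      · exact hba (hb2 ▸ h2)
      · exact hba (hb2 ▸ h2)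
    · rcases prof a haC hsa' with ha | ⟨ha1, ha2⟩ | ⟨ha3, ha2⟩
      · exact key a haC ha
      all_goals rcases prof b hbC hsb' with hb | ⟨hb1, hb2⟩ | ⟨hb3, hb2⟩
      · exact key b hbC hb
      · -- a adj c1, b adj c1 : claw at c1 with c0, a, b
        exact hclaw (mkClaw G (hA 1 0 (by decide)) ha1.symm hb1.symm
          hsa' hsb' hba ((hnotC haC 0).symm) ((hnotC hbC 0).symm) hab)
      · -- a adj c1, b adj c3
        by_cases ha3 : G.Adj a (c 3)
        · exact hclaw (mkClaw G (hA 3 0 (by decide)) ha3.symm hb3.symm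
            hsa' hsb' hba ((hnotC haC 0).symm) ((hnotC hbC 0).symm) hab)
        · by_cases hb1 : G.Adj b (c 1)
          · exact hclaw (mkClaw G (hA 1 0 (by decide)) ha1.symm hb1.symm
              hsa' hsb' hba ((hnotC haC 0).symm) ((hnotC hbC 0).symm) hab)
          · -- 2K2 on a-c1, b-c3
            exact h2K2 (mk2K2 G ha1 hb3 hba ha3
              (fun h => hb1 h.symm) (hN 1 3 (by decide))
              hab (hnotC haC 3) ((hnotC hbC 1).symm) (hne 1 3 (by decide)))
      · exact key b hbC hb
      · -- a adj c3, b adj c1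
        by_cases hb3 : G.Adj b (c 3)
        · exact hclaw (mkClaw G (hA 3 0 (by decide)) ha3.symm hb3.symm
            hsa' hsb' hba ((hnotC haC 0).symm) ((hnotC hbC 0).symm) hab)
        · by_cases ha1 : G.Adj a (c 1)
          · exact hclaw (mkClaw G (hA 1 0 (by decide)) ha1.symm hb1.symm
              hsa' hsb' hba ((hnotC haC 0).symm) ((hnotC hbC 0).symm) hab)
          · exact h2K2 (mk2K2 G hb1 ha3 hba' hb3
              (fun h => ha1 h.symm) (hN 1 3 (by decide))
              (Ne.symm hab) (hnotC hbC 3) ((hnotC haC 1).symm) (hne 1 3 (by decide)))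
      · -- a adj c3, b adj c3
        exact hclaw (mkClaw G (hA 3 0 (by decide)) ha3.symm hb3.symm
          hsa' hsb' hba ((hnotC haC 0).symm) ((hnotC hbC 0).symm) hab)
end
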